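/- arXiv:1702.00252 — 4 statements merged into one kernel-verified Lean document; each statement's English description precedes it below -/
import Mathlib

section
/- Let $m \geq 3$ and let $H$ be a positive definite symmetric $m \times m$ real matrix with $\operatorname{tr}(H) \leq 1$. Then $\frac{(\det H)^{1/2}}{\det(I - H)} \leq \frac{m^{m/2}}{(m-1)^m}$, with equality if and only if $H = \frac{1}{m} I$. -/
open Real Set Finset

set_option maxHeartbeats 1600000

noncomputable def bcgH (x : ℝ) : ℝ := 2 * Real.log (1 - x) - Real.log x

noncomputable def bcgH' (x : ℝ) : ℝ := -2 / (1 - x) - 1 / x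

lemma bcgH_hasDerivAt {x : ℝ} (h0 : 0 < x) (h1 : x < 1) :
    HasDerivAt bcgH (bcgH' x) x := by
  have hx1 : (1:ℝ) - x ≠ 0 := by linarith
  have d1 : HasDerivAt (fun y : ℝ => 1 - y) (-1) x := by
    simpa using (hasDerivAt_id x).const_sub 1
  have d2 : HasDerivAt (fun y : ℝ => Real.log (1 - y)) ((1 - x)⁻¹ * (-1)) x :=
    (Real.hasDerivAt_log hx1).comp x d1
  have d3 : HasDerivAt (fun y : ℝ => Real.log y) x⁻¹ x := Real.hasDerivAt_log (ne_of_gt h0)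
  have := (d2.const_mul 2).sub d3
  exact this.congr_deriv (by unfold bcgH'; ring)

lemma bcgH'_hasDerivAt {x : ℝ} (h0 : 0 < x) (h1 : x < 1) :
    HasDerivAt bcgH' (1 / x ^ 2 - 2 / (1 - x) ^ 2) x := by
  have hx1 : (1:ℝ) - x ≠ 0 := by linarith
  have d1 : HasDerivAt (fun y : ℝ => 1 - y) (-1) x := by
    simpa using (hasDerivAt_id x).const_sub 1
  have d2 : HasDerivAt (fun y : ℝ => (1 - y)⁻¹) (-(((1-x)^2)⁻¹) * (-1)) x :=
    (hasDerivAt_inv hx1).comp x d1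
  have d3 : HasDerivAt (fun y : ℝ => y⁻¹) (-((x^2)⁻¹)) x := hasDerivAt_inv (ne_of_gt h0)
  have := ((d2.const_mul (-2)).sub d3)
  have hf : bcgH' = (fun y : ℝ => -2 * (1 - y)⁻¹) - fun y => y⁻¹ := by
    funext y; simp only [bcgH', Pi.sub_apply]; ring
  rw [hf]
  exact this.congr_deriv (by ring)

lemma bcgH_continuousAt {x : ℝ} (h0 : 0 < x) (h1 : x < 1) : ContinuousAt bcgH x :=
  (bcgH_hasDerivAt h0 h1).differentiableAt.continuousAt

lemma bcgH_convexOn : ConvexOn ℝ (Set.Ioc (0:ℝ) (2/5)) bcgH := by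
  have hint : interior (Set.Ioc (0:ℝ) (2/5)) = Set.Ioo (0:ℝ) (2/5) := interior_Ioc
  apply convexOn_of_hasDerivWithinAt2_nonneg (f' := bcgH') (f'' := fun x => 1 / x ^ 2 - 2 / (1 - x) ^ 2)
    (convex_Ioc _ _)
  · intro x hx
    exact (bcgH_continuousAt hx.1 (by linarith [hx.2])).continuousWithinAt
  · intro x hx
    rw [hint] at hx
    exact (bcgH_hasDerivAt hx.1 (by linarith [hx.2])).hasDerivWithinAt
  · intro x hx
    rw [hint] at hx
    exact (bcgH'_hasDerivAt hx.1 (by linarith [hx.2])).hasDerivWithinAt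
  · intro x hx
    rw [hint] at hx
    obtain ⟨hx0, hx2⟩ := hx
    have h1x : (0:ℝ) < (1 - x) ^ 2 := by nlinarith
    have hx2' : (0:ℝ) < x ^ 2 := by positivity
    rw [sub_nonneg, div_le_div_iff₀ h1x hx2']
    nlinarith

/-- Jensen for bcgH over a finite set. -/
lemma bcgH_jensen {ι : Type*} (t : Finset ι) (ht : t.Nonempty) (ν : ι → ℝ)
    (hmem : ∀ i ∈ t, ν i ∈ Set.Ioc (0:ℝ) (2/5)) :
    (t.card : ℝ) * bcgH ((∑ i ∈ t, ν i) / t.card) ≤ ∑ i ∈ t, bcgH (ν i) := by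
  have hc : (0:ℝ) < t.card := by
    exact_mod_cast Finset.card_pos.2 ht
  have h₁ : ∑ _i ∈ t, (t.card : ℝ)⁻¹ = 1 := by
    rw [Finset.sum_const, nsmul_eq_mul, mul_inv_cancel₀ (ne_of_gt hc)]
  have := bcgH_convexOn.map_sum_le (t := t) (w := fun _ => (t.card:ℝ)⁻¹) (p := ν)
    (fun i _ => by positivity) h₁ hmem
  simp only [smul_eq_mul] at this
  have e1 : ∑ i ∈ t, (t.card:ℝ)⁻¹ * ν i = (∑ i ∈ t, ν i) / t.card := by
    rw [← Finset.mul_sum]; ring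
  have e2 : ∑ i ∈ t, (t.card:ℝ)⁻¹ * bcgH (ν i) = (∑ i ∈ t, bcgH (ν i)) / t.card := by
    rw [← Finset.mul_sum]; ring
  rw [e1, e2] at this
  calc (t.card : ℝ) * bcgH ((∑ i ∈ t, ν i) / t.card)
      ≤ (t.card : ℝ) * ((∑ i ∈ t, bcgH (ν i)) / t.card) := by
        exact mul_le_mul_of_nonneg_left this (le_of_lt hc)
    _ = ∑ i ∈ t, bcgH (ν i) := by field_simp

lemma exp_bcgH {x : ℝ} (h0 : 0 < x) (h1 : x < 1) :
    Real.exp (bcgH x) = (1 - x)^2 / x := by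
  have h1x : (0:ℝ) < 1 - x := by linarith
  have : bcgH x = Real.log ((1-x)^2) - Real.log x := by
    unfold bcgH; rw [Real.log_pow]; push_cast; ring
  rw [this, Real.exp_sub, Real.exp_log (by positivity), Real.exp_log h0]

/-- strict monotonicity of ψ(a) = h(a) + (M-1) h((1-a)/(M-1)) on [1/M, 1) -/
lemma bcg_psi_mono (M : ℝ) (hM : 3 ≤ M) :
    StrictMonoOn (fun a => bcgH a + (M-1) * bcgH ((1-a)/(M-1))) (Set.Ico (1/M) 1) := by
  have hM0 : (0:ℝ) < M := by linarith
  have hM1 : (0:ℝ) < M - 1 := by linarith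
  have hfacts : ∀ a ∈ Set.Ico (1/M) 1, 0 < a ∧ a < 1 ∧ 0 < (1-a)/(M-1) ∧ (1-a)/(M-1) < 1 := by
    intro a ha
    obtain ⟨ha1, ha2⟩ := ha
    have h1M : 0 < 1/M := by positivity
    have ha0 : 0 < a := lt_of_lt_of_le h1M ha1
    refine ⟨ha0, ha2, div_pos (by linarith) hM1, ?_⟩
    rw [div_lt_one hM1]; linarith
  apply strictMonoOn_of_deriv_pos (convex_Ico _ _)
  · intro a ha
    obtain ⟨ha0, ha1, hc0, hc1⟩ := hfacts a ha
    apply ContinuousAt.continuousWithinAt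
    apply ContinuousAt.add (bcgH_continuousAt ha0 ha1)
    apply ContinuousAt.mul continuousAt_const
    have hline : ContinuousAt (fun y : ℝ => (1-y)/(M-1)) a :=
      ContinuousAt.div_const (ContinuousAt.sub continuousAt_const continuousAt_id) _
    exact ContinuousAt.comp (g := bcgH) (f := fun y : ℝ => (1-y)/(M-1)) (x := a) (bcgH_continuousAt hc0 hc1) hline
  · intro a ha
    rw [interior_Ico] at ha
    obtain ⟨ha1, ha2⟩ := ha
    obtain ⟨ha0, ha1', hc0, hc1⟩ := hfacts a ⟨le_of_lt ha1, ha2⟩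
    set c := (1-a)/(M-1) with hc
    have d_inner : HasDerivAt (fun a : ℝ => (1-a)/(M-1)) (-1/(M-1)) a := by
      have : HasDerivAt (fun a : ℝ => 1-a) (-1) a := by
        simpa using (hasDerivAt_id a).const_sub 1
      exact this.div_const (M-1)
    have d_comp : HasDerivAt (fun a : ℝ => bcgH ((1-a)/(M-1))) (bcgH' c * (-1/(M-1))) a :=
      ((bcgH_hasDerivAt hc0 hc1).comp a d_inner :)
    have total : HasDerivAt (fun a => bcgH a + (M-1) * bcgH ((1-a)/(M-1)))
        (bcgH' a - bcgH' c) a := by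
      have h := (bcgH_hasDerivAt ha0 ha1').add (d_comp.const_mul (M-1))
      have e : (M-1) * (-1/(M-1)) = -1 := by
        rw [mul_div_assoc', mul_neg_one, neg_div, div_self (ne_of_gt hM1)]
      exact h.congr_deriv (by linear_combination bcgH' c * e)
    rw [total.deriv]
    have h1 : a ≠ 0 := ne_of_gt ha0
    have h2 : (1:ℝ) - a ≠ 0 := by intro h; rw [sub_eq_zero] at h; exact (ne_of_lt ha2) h.symm
    have h3 : M - 1 ≠ 0 := ne_of_gt hM1
    have h4 : M - 2 + a ≠ 0 := by intro h; nlinarith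
    have e1 : 1 - c = (M-2+a)/(M-1) := by rw [hc]; field_simp; ring
    have e2 : bcgH' c = -2*(M-1) / (M-2+a) - (M-1)/(1-a) := by
      unfold bcgH'
      rw [e1, hc, div_div_eq_mul_div, div_div_eq_mul_div]
      ring
    have key : bcgH' a - bcgH' c = (M*a - 1)*(M - 2 - a) / (a*(1-a)*(M-2+a)) := by
      rw [e2]; unfold bcgH'
      field_simp
      ring
    rw [key]
    apply div_pos
    · apply mul_pos
      · rw [one_div] at ha1
        nlinarith [(inv_lt_iff_one_lt_mul₀ hM0).1 ha1]
      · nlinarith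
    · apply mul_pos (mul_pos ha0 (by linarith)) (by nlinarith)

lemma bcg_slide (M : ℝ) (hM : 3 ≤ M) (T b : ℝ) (hb1 : 2/5 < b) (hb2 : b ≤ 1/2)
    (hTb : b < T) (hT : T ≤ 3/5) :
    bcgH (2/5) + (M-2) * bcgH ((T - 2/5)/(M-2)) ≤ bcgH b + (M-2) * bcgH ((T - b)/(M-2)) := by
  have hM2 : (0:ℝ) < M - 2 := by linarith
  have hfacts : ∀ β ∈ Set.Icc (2/5 : ℝ) b, 0 < β ∧ β < 1 ∧ 0 < (T-β)/(M-2) ∧ (T-β)/(M-2) < 1 := by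
    intro β hβ
    obtain ⟨hβ1, hβ2⟩ := hβ
    have hc0 : 0 < (T-β)/(M-2) := div_pos (by linarith) hM2
    refine ⟨by linarith, by linarith, hc0, ?_⟩
    rw [div_lt_one hM2]; linarith
  have hmono : MonotoneOn (fun β => bcgH β + (M-2) * bcgH ((T - β)/(M-2)))
      (Set.Icc (2/5 : ℝ) b) := by
    apply monotoneOn_of_deriv_nonneg (convex_Icc _ _)
    · intro β hβ
      obtain ⟨h0, h1, hc0, hc1⟩ := hfacts β hβ
      apply ContinuousAt.continuousWithinAt
      apply ContinuousAt.add (bcgH_continuousAt h0 h1)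
      apply ContinuousAt.mul continuousAt_const
      have hline : ContinuousAt (fun y : ℝ => (T-y)/(M-2)) β :=
        ContinuousAt.div_const (ContinuousAt.sub continuousAt_const continuousAt_id) _
      exact ContinuousAt.comp (g := bcgH) (f := fun y : ℝ => (T-y)/(M-2)) (x := β)
        (bcgH_continuousAt hc0 hc1) hline
    · rw [interior_Icc]
      intro β hβ
      obtain ⟨h0, h1, hc0, hc1⟩ := hfacts β (Set.mem_Icc.2 ⟨le_of_lt hβ.1, le_of_lt hβ.2⟩)
      have d_inner : HasDerivAt (fun y : ℝ => (T-y)/(M-2)) (-1/(M-2)) β := by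
        have : HasDerivAt (fun y : ℝ => T-y) (-1) β := by
          simpa using (hasDerivAt_id β).const_sub T
        exact this.div_const (M-2)
      have d_comp : HasDerivAt (fun y : ℝ => bcgH ((T-y)/(M-2)))
          (bcgH' ((T-β)/(M-2)) * (-1/(M-2))) β :=
        ((bcgH_hasDerivAt hc0 hc1).comp β d_inner :)
      have total : HasDerivAt (fun y => bcgH y + (M-2) * bcgH ((T - y)/(M-2)))
          (bcgH' β - bcgH' ((T-β)/(M-2))) β := by
        have h := (bcgH_hasDerivAt h0 h1).add (d_comp.const_mul (M-2))
        have e : (M-2) * (-1/(M-2)) = -1 := by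
          rw [mul_div_assoc', mul_neg_one, neg_div, div_self (ne_of_gt hM2)]
        exact h.congr_deriv (by linear_combination bcgH' ((T-β)/(M-2)) * e)
      apply DifferentiableAt.differentiableWithinAt total.differentiableAt
    · rw [interior_Icc]
      intro β hβ
      obtain ⟨h0, h1, hc0, hc1⟩ := hfacts β (Set.mem_Icc.2 ⟨le_of_lt hβ.1, le_of_lt hβ.2⟩)
      set c := (T-β)/(M-2) with hcdef
      have d_inner : HasDerivAt (fun y : ℝ => (T-y)/(M-2)) (-1/(M-2)) β := by
        have : HasDerivAt (fun y : ℝ => T-y) (-1) β := by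
          simpa using (hasDerivAt_id β).const_sub T
        exact this.div_const (M-2)
      have d_comp : HasDerivAt (fun y : ℝ => bcgH ((T-y)/(M-2))) (bcgH' c * (-1/(M-2))) β :=
        ((bcgH_hasDerivAt hc0 hc1).comp β d_inner :)
      have total : HasDerivAt (fun y => bcgH y + (M-2) * bcgH ((T - y)/(M-2)))
          (bcgH' β - bcgH' c) β := by
        have h := (bcgH_hasDerivAt h0 h1).add (d_comp.const_mul (M-2))
        have e : (M-2) * (-1/(M-2)) = -1 := by
          rw [mul_div_assoc', mul_neg_one, neg_div, div_self (ne_of_gt hM2)]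
        exact h.congr_deriv (by linear_combination bcgH' c * e)
      rw [total.deriv]
      -- positivity of bcgH' β - bcgH' c
      have hβ1 : 2/5 < β := hβ.1
      have hβ2 : β < b := hβ.2
      have A1 : 2/(1-β) ≤ 4 := by
        rw [div_le_iff₀ (by linarith : (0:ℝ) < 1 - β)]; linarith
      have A2 : 1/β ≤ 5/2 := by
        rw [div_le_iff₀ (by linarith : (0:ℝ) < β)]; linarith
      have A3 : (2:ℝ) ≤ 2/(1-c) := by
        rw [le_div_iff₀ (by linarith : (0:ℝ) < 1 - c)]; nlinarith
      have A4 : 5*(M-2) ≤ 1/c := by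
        rw [hcdef, one_div_div, le_div_iff₀ (by linarith : (0:ℝ) < T - β)]
        nlinarith
      unfold bcgH'
      have e : -2/(1-β) - 1/β - (-2/(1-c) - 1/c) = (2/(1-c) + 1/c) - (2/(1-β) + 1/β) := by
        ring
      rw [e]
      linarith
  have h25 : (2/5 : ℝ) ∈ Set.Icc (2/5:ℝ) b := Set.mem_Icc.2 ⟨le_refl _, le_of_lt hb1⟩
  have hbb : b ∈ Set.Icc (2/5:ℝ) b := Set.mem_Icc.2 ⟨le_of_lt hb1, le_refl _⟩
  exact hmono h25 hbb (le_of_lt hb1)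

lemma bcg_core (m : ℕ) (hm : 3 ≤ m) (ν : Fin m → ℝ) (hpos : ∀ i, 0 < ν i)
    (hsum : ∑ i, ν i = 1) (hne : ∃ i, ν i ≠ 1/(m:ℝ)) :
    (m:ℝ) * bcgH (1/(m:ℝ)) < ∑ i, bcgH (ν i) := by
  set M := (m:ℝ) with hMdef
  have hM : (3:ℝ) ≤ M := by rw [hMdef]; exact_mod_cast hm
  have hM0 : (0:ℝ) < M := by linarith
  -- the max
  obtain ⟨i₀, -, hmax⟩ := Finset.exists_max_image (univ : Finset (Fin m)) ν
    ⟨⟨0, by omega⟩, mem_univ _⟩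
  set a := ν i₀ with hadef
  have ha0 : 0 < a := hpos i₀
  have hcard_univ : (univ : Finset (Fin m)).card = m := by simp
  have hi₀mem : i₀ ∈ (univ : Finset (Fin m)) := mem_univ _
  have herase_card : ((univ : Finset (Fin m)).erase i₀).card = m - 1 := by
    rw [card_erase_of_mem hi₀mem, hcard_univ]
  have herase_ne : ((univ : Finset (Fin m)).erase i₀).Nonempty := by
    rw [← Finset.card_pos, herase_card]; omega
  have hcard1 : ((((univ : Finset (Fin m)).erase i₀).card : ℕ) : ℝ) = M - 1 := by
    rw [herase_card, Nat.cast_sub (by omega), Nat.cast_one]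
  have hsum_erase : ∑ j ∈ (univ : Finset (Fin m)).erase i₀, ν j = 1 - a := by
    have := Finset.add_sum_erase (univ : Finset (Fin m)) ν hi₀mem
    rw [hsum] at this; linarith
  have ha1 : a < 1 := by
    have hp : 0 < ∑ j ∈ (univ : Finset (Fin m)).erase i₀, ν j :=
      Finset.sum_pos (fun j _ => hpos j) herase_ne
    linarith [hsum_erase]
  have haM : 1/M ≤ a := by
    have h1 : (1:ℝ) ≤ M * a := by
      have h2 : ∑ i, ν i ≤ ∑ _i : Fin m, a :=
        Finset.sum_le_sum (fun i _ => hmax i (mem_univ i))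
      rw [hsum, Finset.sum_const, hcard_univ, nsmul_eq_mul] at h2
      exact h2
    rw [div_le_iff₀ hM0]; linarith
  have hM1 : (1:ℝ)/M < 1 := by
    rw [div_lt_one hM0]; linarith
  -- ψ facts
  have hψeq : bcgH (1/M) + (M-1) * bcgH ((1-(1/M))/(M-1)) = M * bcgH (1/M) := by
    have he : (1-(1/M))/(M-1) = 1/M := by
      rw [div_eq_div_iff (by linarith) (by linarith)]
      field_simp
    rw [he]; ring
  have hψlt : ∀ x, 1/M < x → x < 1 →
      M * bcgH (1/M) < bcgH x + (M-1) * bcgH ((1-x)/(M-1)) := by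
    intro x hx1 hx2
    have h0 : bcgH (1/M) + (M-1) * bcgH ((1-(1/M))/(M-1))
        < bcgH x + (M-1) * bcgH ((1-x)/(M-1)) :=
      bcg_psi_mono M hM (Set.mem_Ico.2 ⟨le_refl _, hM1⟩)
        (Set.mem_Ico.2 ⟨le_of_lt hx1, hx2⟩) hx1
    linarith [hψeq]
  by_cases hB : ∀ j, j ≠ i₀ → ν j ≤ 2/5
  · -- Case A
    have haj : 1/M < a := by
      rcases lt_or_eq_of_le haM with h | h
      · exact h
      · exfalso
        obtain ⟨i, hi⟩ := hne
        have hle : ∀ j ∈ (univ : Finset (Fin m)), ν j ≤ 1/M := by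
          intro j _; rw [h]; exact hmax j (mem_univ j)
        have hlt : ∑ j ∈ (univ : Finset (Fin m)), ν j < ∑ _j ∈ (univ : Finset (Fin m)), 1/M := by
          apply Finset.sum_lt_sum hle
          refine ⟨i, mem_univ i, lt_of_le_of_ne (hle i (mem_univ i)) hi⟩
        rw [hsum, Finset.sum_const, hcard_univ, nsmul_eq_mul] at hlt
        have hMM : (m:ℝ) * (1/M) = 1 := by
          rw [← hMdef]; field_simp
        rw [hMM] at hlt
        exact lt_irrefl _ hlt
    have hjen := bcgH_jensen ((univ : Finset (Fin m)).erase i₀) herase_ne ν ?memA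
    case memA =>
      intro j hj
      exact ⟨hpos j, hB j (Finset.ne_of_mem_erase hj)⟩
    rw [hsum_erase, hcard1] at hjen
    have hsplit : ∑ i, bcgH (ν i) = bcgH a + ∑ j ∈ (univ : Finset (Fin m)).erase i₀, bcgH (ν j) := by
      have e1 := Finset.add_sum_erase (univ : Finset (Fin m)) (fun i => bcgH (ν i)) hi₀mem
      linear_combination -e1
    calc M * bcgH (1/M) < bcgH a + (M-1) * bcgH ((1-a)/(M-1)) := hψlt a haj ha1
      _ ≤ bcgH a + ∑ j ∈ (univ : Finset (Fin m)).erase i₀, bcgH (ν j) := by linarith [hjen]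
      _ = ∑ i, bcgH (ν i) := hsplit.symm
  · -- Case B
    push_neg at hB
    obtain ⟨j₀, hj₀ne, hj₀b⟩ := hB
    set b := ν j₀ with hbdef
    have hba : b ≤ a := hmax j₀ (mem_univ j₀)
    have ha25 : 2/5 < a := lt_of_lt_of_le hj₀b hba
    have hj₀mem : j₀ ∈ (univ : Finset (Fin m)).erase i₀ :=
      Finset.mem_erase.2 ⟨hj₀ne, mem_univ j₀⟩
    set rest := ((univ : Finset (Fin m)).erase i₀).erase j₀ with hrest
    have hrest_card : rest.card = m - 2 := by
      rw [hrest, card_erase_of_mem hj₀mem, herase_card]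
      omega
    have hrest_ne : rest.Nonempty := by
      rw [← Finset.card_pos, hrest_card]; omega
    have hcard2 : ((rest.card : ℕ) : ℝ) = M - 2 := by
      rw [hrest_card, Nat.cast_sub (by omega)]; norm_num; exact hMdef.symm
    have hM2 : (0:ℝ) < M - 2 := by linarith
    have hsum_rest : ∑ k ∈ rest, ν k = 1 - a - b := by
      have := Finset.add_sum_erase ((univ : Finset (Fin m)).erase i₀) ν hj₀mem
      rw [hsum_erase] at this
      rw [hrest]; linarith
    have hr_pos : 0 < 1 - a - b := by
      rw [← hsum_rest]; exact Finset.sum_pos (fun k _ => hpos k) hrest_ne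
    have hb_half : b < 1/2 := by linarith
    have hrest_small : ∀ k ∈ rest, ν k ≤ 1/5 := by
      intro k hk
      have hk_le : ν k ≤ ∑ k' ∈ rest, ν k' :=
        Finset.single_le_sum (fun k' _ => le_of_lt (hpos k')) hk
      rw [hsum_rest] at hk_le
      linarith
    -- Jensen on rest
    have hjen := bcgH_jensen rest hrest_ne ν ?memB
    case memB =>
      intro k hk
      exact ⟨hpos k, le_trans (hrest_small k hk) (by norm_num)⟩
    rw [hsum_rest, hcard2] at hjen
    -- slide
    have hslide := bcg_slide M hM (1 - a) b hj₀b (le_of_lt hb_half) (by linarith) (by linarith)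
    have hTbr : (1 - a - b) = (1 - a) - b := by ring
    -- two-point Jensen
    have h2pt : (M-1) * bcgH ((1-a)/(M-1)) ≤
        bcgH (2/5) + (M-2) * bcgH (((1-a) - 2/5)/(M-2)) := by
      have hw1 : (0:ℝ) ≤ 1/(M-1) := le_of_lt (div_pos one_pos (by linarith))
      have hw2 : (0:ℝ) ≤ (M-2)/(M-1) := div_nonneg (by linarith) (by linarith)
      have hws : 1/(M-1) + (M-2)/(M-1) = 1 := by
        rw [← add_div, div_eq_one_iff_eq (by linarith)]; ring
      have hx : (2/5 : ℝ) ∈ Set.Ioc (0:ℝ) (2/5) := ⟨by norm_num, le_refl _⟩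
      have hy : ((1-a) - 2/5)/(M-2) ∈ Set.Ioc (0:ℝ) (2/5) := by
        constructor
        · apply div_pos _ hM2; linarith
        · rw [div_le_iff₀ hM2]; nlinarith
      have := bcgH_convexOn.2 hx hy hw1 hw2 hws
      simp only [smul_eq_mul] at this
      have hne1 : M - 1 ≠ 0 := by linarith
      have hne2 : M - 2 ≠ 0 := ne_of_gt hM2
      have hcombo : 1/(M-1) * (2/5) + (M-2)/(M-1) * (((1-a) - 2/5)/(M-2)) = (1-a)/(M-1) := by
        field_simp
        ring
      rw [hcombo] at this
      have hM1pos : (0:ℝ) < M - 1 := by linarith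
      have h3 := mul_le_mul_of_nonneg_left this (le_of_lt hM1pos)
      have he2 : (M-1) * (1/(M-1) * bcgH (2/5) + (M-2)/(M-1) * bcgH (((1-a) - 2/5)/(M-2)))
          = bcgH (2/5) + (M-2) * bcgH (((1-a) - 2/5)/(M-2)) := by
        field_simp
      rw [he2] at h3
      exact h3
    -- final chain
    have hsplit : ∑ i, bcgH (ν i) = bcgH a + (bcgH b + ∑ k ∈ rest, bcgH (ν k)) := by
      have e1 := Finset.add_sum_erase (univ : Finset (Fin m)) (fun i => bcgH (ν i)) hi₀mem
      have e2 := Finset.add_sum_erase ((univ : Finset (Fin m)).erase i₀)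
        (fun i => bcgH (ν i)) hj₀mem
      linear_combination -e1 - e2
    have haj : 1/M < a := by
      have h13 : (1:ℝ)/M ≤ 1/3 := by
        rw [div_le_div_iff₀ hM0 (by norm_num : (0:ℝ) < 3)]
        linarith
      linarith
    have heq1 : ((1-a) - b)/(M-2) = (1 - a - b)/(M-2) := by ring_nf
    calc M * bcgH (1/M) < bcgH a + (M-1) * bcgH ((1-a)/(M-1)) := hψlt a haj ha1
      _ ≤ bcgH a + (bcgH (2/5) + (M-2) * bcgH (((1-a) - 2/5)/(M-2))) := by linarith [h2pt]
      _ ≤ bcgH a + (bcgH b + (M-2) * bcgH (((1-a) - b)/(M-2))) := by linarith [hslide]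
      _ ≤ bcgH a + (bcgH b + ∑ k ∈ rest, bcgH (ν k)) := by
          rw [heq1]
          linarith [hjen]
      _ = ∑ i, bcgH (ν i) := hsplit.symm

lemma bcg_core_le (m : ℕ) (hm : 3 ≤ m) (ν : Fin m → ℝ) (hpos : ∀ i, 0 < ν i)
    (hsum : ∑ i, ν i = 1) :
    (m:ℝ) * bcgH (1/(m:ℝ)) ≤ ∑ i, bcgH (ν i) := by
  by_cases hu : ∀ i, ν i = 1/(m:ℝ)
  · have : ∑ i, bcgH (ν i) = (m:ℝ) * bcgH (1/(m:ℝ)) := by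
      rw [Finset.sum_congr rfl (fun i _ => by rw [hu i])]
      rw [Finset.sum_const, Finset.card_univ, Fintype.card_fin, nsmul_eq_mul]
    linarith
  · push_neg at hu
    exact le_of_lt (bcg_core m hm ν hpos hsum hu)

/-- product form of the core inequality (for sums = 1) -/
lemma bcg_prod (m : ℕ) (hm : 3 ≤ m) (ν : Fin m → ℝ) (hpos : ∀ i, 0 < ν i)
    (hlt1 : ∀ i, ν i < 1) (hsum : ∑ i, ν i = 1) :
    ((m:ℝ)-1)^(2*m) * ∏ i, ν i ≤ (m:ℝ)^m * (∏ i, (1 - ν i))^2 ∧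
    ((∃ i, ν i ≠ 1/(m:ℝ)) →
      ((m:ℝ)-1)^(2*m) * ∏ i, ν i < (m:ℝ)^m * (∏ i, (1 - ν i))^2) := by
  set M := (m:ℝ) with hMdef
  have hM : (3:ℝ) ≤ M := by rw [hMdef]; exact_mod_cast hm
  have hM0 : (0:ℝ) < M := by linarith
  have hprod_pos : 0 < ∏ i, ν i := Finset.prod_pos (fun i _ => hpos i)
  have hprod1_pos : 0 < ∏ i, (1 - ν i) := Finset.prod_pos (fun i _ => by linarith [hlt1 i])
  -- exp of the sum
  have hexp_sum : Real.exp (∑ i, bcgH (ν i)) = (∏ i, (1 - ν i))^2 / ∏ i, ν i := by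
    rw [Real.exp_sum]
    rw [Finset.prod_congr rfl (fun i _ => exp_bcgH (hpos i) (hlt1 i))]
    rw [Finset.prod_div_distrib, ← Finset.prod_pow]
  have h1M0 : 0 < 1/M := by positivity
  have h1M1 : 1/M < 1 := by rw [div_lt_one hM0]; linarith
  have hexp_lhs : Real.exp (M * bcgH (1/M)) = ((M-1)^2/M)^m := by
    have e : (1 - 1/M)^2/(1/M) = (M-1)^2/M := by
      field_simp
    rw [hMdef, Real.exp_nat_mul, exp_bcgH h1M0 h1M1, ← hMdef, e]
  -- the core inequality, exponentiated
  have key : ∀ (X : ℝ), M * bcgH (1/M) ≤ X →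
      ((M:ℝ)-1)^(2*m) / M^m ≤ Real.exp X := by
    intro X hX
    have h1 := Real.exp_le_exp.2 hX
    rw [hexp_lhs] at h1
    have e2 : ((M-1)^2/M)^m = (M-1)^(2*m) / M^m := by
      rw [div_pow, ← pow_mul]
    rw [e2] at h1
    exact h1
  have keylt : ∀ (X : ℝ), M * bcgH (1/M) < X →
      ((M:ℝ)-1)^(2*m) / M^m < Real.exp X := by
    intro X hX
    have h1 := Real.exp_lt_exp.2 hX
    rw [hexp_lhs] at h1
    have e2 : ((M-1)^2/M)^m = (M-1)^(2*m) / M^m := by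
      rw [div_pow, ← pow_mul]
    rw [e2] at h1
    exact h1
  have hMm : (0:ℝ) < M^m := by positivity
  constructor
  · have h1 := key _ (bcg_core_le m hm ν hpos hsum)
    rw [hexp_sum] at h1
    rw [div_le_div_iff₀ hMm hprod_pos] at h1
    linarith
  · intro hne
    have h1 := keylt _ (bcg_core m hm ν hpos hsum hne)
    rw [hexp_sum] at h1
    rw [div_lt_div_iff₀ hMm hprod_pos] at h1
    linarith

lemma bcg_scalar (m : ℕ) (hm : 3 ≤ m) (μ : Fin m → ℝ) (hpos : ∀ i, 0 < μ i)
    (hsum : ∑ i, μ i ≤ 1) :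
    (∀ i, μ i < 1) ∧
    (((m:ℝ)-1)^(2*m) * ∏ i, μ i ≤ (m:ℝ)^m * (∏ i, (1 - μ i))^2 ∧
    ((∃ i, μ i ≠ 1/(m:ℝ)) →
      ((m:ℝ)-1)^(2*m) * ∏ i, μ i < (m:ℝ)^m * (∏ i, (1 - μ i))^2)) := by
  set M := (m:ℝ) with hMdef
  have hM : (3:ℝ) ≤ M := by rw [hMdef]; exact_mod_cast hm
  set s := ∑ i, μ i with hsdef
  have hs0 : 0 < s := Finset.sum_pos (fun i _ => hpos i) ⟨⟨0, by omega⟩, mem_univ _⟩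
  have hlt_s : ∀ i, μ i < s := by
    intro i
    have he := Finset.add_sum_erase (univ : Finset (Fin m)) μ (mem_univ i)
    have hp : 0 < ∑ j ∈ (univ : Finset (Fin m)).erase i, μ j := by
      apply Finset.sum_pos (fun j _ => hpos j)
      rw [← Finset.card_pos, card_erase_of_mem (mem_univ i), Finset.card_univ, Fintype.card_fin]
      omega
    rw [← hsdef] at he
    linarith
  have hlt1 : ∀ i, μ i < 1 := fun i => lt_of_lt_of_le (hlt_s i) hsum
  refine ⟨hlt1, ?_⟩
  set ν := fun i => μ i / s with hνdef
  have hνpos : ∀ i, 0 < ν i := fun i => div_pos (hpos i) hs0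
  have hνlt1 : ∀ i, ν i < 1 := fun i => (div_lt_one hs0).2 (hlt_s i)
  have hνsum : ∑ i, ν i = 1 := by
    rw [hνdef, ← Finset.sum_div, ← hsdef, div_self (ne_of_gt hs0)]
  obtain ⟨hP2, hP2s⟩ := bcg_prod m hm ν hνpos hνlt1 hνsum
  have hpow_pos : (0:ℝ) < (M-1)^(2*m) := by
    apply pow_pos; linarith
  have hMm_pos : (0:ℝ) < M^m := by positivity
  have hμν : ∀ i, μ i ≤ ν i := by
    intro i
    rw [hνdef, le_div_iff₀ hs0]
    nlinarith [hpos i]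
  have hprodμν : ∏ i, μ i ≤ ∏ i, ν i :=
    Finset.prod_le_prod (fun i _ => le_of_lt (hpos i)) (fun i _ => hμν i)
  have h1ν_nonneg : ∀ i, (0:ℝ) ≤ 1 - ν i := fun i => by linarith [hνlt1 i]
  have hprod1 : ∏ i, (1 - ν i) ≤ ∏ i, (1 - μ i) := by
    apply Finset.prod_le_prod (fun i _ => h1ν_nonneg i)
    intro i _
    have := hμν i; linarith
  have hsq : (∏ i, (1 - ν i))^2 ≤ (∏ i, (1 - μ i))^2 := by
    apply pow_le_pow_left₀ (Finset.prod_nonneg (fun i _ => h1ν_nonneg i)) hprod1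
  constructor
  · calc (M-1)^(2*m) * ∏ i, μ i ≤ (M-1)^(2*m) * ∏ i, ν i :=
          mul_le_mul_of_nonneg_left hprodμν (le_of_lt hpow_pos)
      _ ≤ M^m * (∏ i, (1 - ν i))^2 := hP2
      _ ≤ M^m * (∏ i, (1 - μ i))^2 := mul_le_mul_of_nonneg_left hsq (le_of_lt hMm_pos)
  · intro hne
    rcases eq_or_lt_of_le hsum with hs1 | hs1
    · -- s = 1, so ν = μ
      have hνμ : ν = μ := by
        funext i
        show μ i / s = μ i
        have hs1' : s = 1 := by rw [hsdef]; exact hs1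
        rw [hs1', div_one]
      rw [hνμ] at hP2s
      have hlt := hP2s hne
      calc (M-1)^(2*m) * ∏ i, μ i < M^m * (∏ i, (1 - μ i))^2 := hlt
        _ ≤ M^m * (∏ i, (1 - μ i))^2 := le_refl _
    · -- s < 1 : strict in scaling
      have hstrict : ∏ i, μ i < ∏ i, ν i := by
        apply Finset.prod_lt_prod (fun i _ => hpos i) (fun i _ => hμν i)
        refine ⟨⟨0, by omega⟩, mem_univ _, ?_⟩
        rw [hνdef, lt_div_iff₀ hs0]
        nlinarith [hpos (⟨0, by omega⟩ : Fin m)]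
      calc (M-1)^(2*m) * ∏ i, μ i < (M-1)^(2*m) * ∏ i, ν i :=
            mul_lt_mul_of_pos_left hstrict hpow_pos
        _ ≤ M^m * (∏ i, (1 - ν i))^2 := hP2
        _ ≤ M^m * (∏ i, (1 - μ i))^2 := mul_le_mul_of_nonneg_left hsq (le_of_lt hMm_pos)

/-- conversion between the squared polynomial form and the sqrt/div form -/
lemma bcg_sqrt_form (m : ℕ) (hm : 3 ≤ m) (P Q : ℝ) (hP : 0 ≤ P) (hQ : 0 < Q) :
    (((m:ℝ)-1)^(2*m) * P ≤ (m:ℝ)^m * Q^2 →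
      Real.sqrt P / Q ≤ (m:ℝ)^((m:ℝ)/2) / ((m:ℝ)-1)^m) ∧
    (((m:ℝ)-1)^(2*m) * P < (m:ℝ)^m * Q^2 →
      Real.sqrt P / Q < (m:ℝ)^((m:ℝ)/2) / ((m:ℝ)-1)^m) := by
  set M := (m:ℝ) with hMdef
  have hM : (3:ℝ) ≤ M := by rw [hMdef]; exact_mod_cast hm
  have hM0 : (0:ℝ) < M := by linarith
  have hM1 : (0:ℝ) < M - 1 := by linarith
  set B := M^((m:ℝ)/2) / (M-1)^m with hBdef
  have hB0 : 0 < B := div_pos (Real.rpow_pos_of_pos hM0 _) (pow_pos hM1 m)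
  have hBQsq : (B*Q)^2 = M^m * Q^2 / (M-1)^(2*m) := by
    have h1 : (M ^ ((m:ℝ)/2))^2 = M^m := by
      rw [sq, ← Real.rpow_add hM0]
      have : (m:ℝ)/2 + (m:ℝ)/2 = ((m:ℕ):ℝ) := by ring
      rw [this, Real.rpow_natCast]
    have h2 : ((M-1)^m)^2 = (M-1)^(2*m) := by
      rw [← pow_mul, mul_comm]
    rw [hBdef, mul_pow, div_pow, h1, h2]
    ring
  have hpowpos : (0:ℝ) < (M-1)^(2*m) := pow_pos hM1 _
  constructor
  · intro hle
    have hP2 : P ≤ (B*Q)^2 := by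
      rw [hBQsq, le_div_iff₀ hpowpos]
      linarith
    have := Real.sqrt_le_sqrt hP2
    rw [Real.sqrt_sq (by positivity : (0:ℝ) ≤ B*Q)] at this
    rw [div_le_iff₀ hQ]
    exact this
  · intro hlt
    have hP2 : P < (B*Q)^2 := by
      rw [hBQsq, lt_div_iff₀ hpowpos]
      linarith
    have := Real.sqrt_lt_sqrt hP hP2
    rw [Real.sqrt_sq (by positivity : (0:ℝ) ≤ B*Q)] at this
    rw [div_lt_iff₀ hQ]
    exact this

/-- **Besson–Courtois–Gallot determinant inequality.**
For `m ≥ 3` and a positive definite symmetric real `m × m` matrix `H` with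
`tr H ≤ 1`, one has `(det H)^(1/2) / det (I - H) ≤ m^(m/2) / (m-1)^m`,
with equality if and only if `H = (1/m) I`. -/
theorem bcg_det_inequality (m : ℕ) (hm : 3 ≤ m)
    (H : Matrix (Fin m) (Fin m) ℝ) (hpos : H.PosDef) (htr : H.trace ≤ 1) :
    Real.sqrt H.det / (1 - H).det ≤ (m : ℝ) ^ ((m : ℝ) / 2) / ((m : ℝ) - 1) ^ m ∧
    (Real.sqrt H.det / (1 - H).det = (m : ℝ) ^ ((m : ℝ) / 2) / ((m : ℝ) - 1) ^ m ↔
      H = ((m : ℝ)⁻¹) • (1 : Matrix (Fin m) (Fin m) ℝ)) := by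
  have hH : H.IsHermitian := hpos.1
  set lam := hH.eigenvalues with hlam
  set U := hH.eigenvectorUnitary with hU
  set D := Matrix.diagonal ((RCLike.ofReal ∘ lam : Fin m → ℝ)) with hD
  have hDlam : D = Matrix.diagonal lam := by
    rw [hD, RCLike.ofReal_real_eq_id, Function.id_comp]
  have hUU' : star (U : Matrix (Fin m) (Fin m) ℝ) * U = 1 :=
    Matrix.mem_unitaryGroup_iff'.mp U.prop
  have hUU : (U : Matrix (Fin m) (Fin m) ℝ) * star (U : Matrix (Fin m) (Fin m) ℝ) = 1 :=
    Matrix.mem_unitaryGroup_iff.mp U.prop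
  have hspec : H = (U : Matrix (Fin m) (Fin m) ℝ) * D * star (U : Matrix (Fin m) (Fin m) ℝ) :=
    hH.spectral_theorem
  have hlampos : ∀ i, 0 < lam i := fun i => hpos.eigenvalues_pos i
  -- trace
  have htrace : H.trace = ∑ i, lam i := by
    rw [hspec, Matrix.trace_mul_cycle, hUU', Matrix.one_mul, hDlam, Matrix.trace_diagonal]
  -- det
  have hdet : H.det = ∏ i, lam i := by
    rw [hspec, Matrix.det_mul, Matrix.det_mul, hDlam]
    have : (U : Matrix (Fin m) (Fin m) ℝ).det * (Matrix.diagonal lam).det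
        * (star (U : Matrix (Fin m) (Fin m) ℝ)).det
        = ((U : Matrix (Fin m) (Fin m) ℝ).det * (star (U : Matrix (Fin m) (Fin m) ℝ)).det)
          * (Matrix.diagonal lam).det := by ring
    rw [this, ← Matrix.det_mul, hUU, Matrix.det_one, one_mul, Matrix.det_diagonal]
  -- det (1 - H)
  have hsub : (1 : Matrix (Fin m) (Fin m) ℝ) - H
      = (U : Matrix (Fin m) (Fin m) ℝ) * (1 - D) * star (U : Matrix (Fin m) (Fin m) ℝ) := by
    rw [Matrix.mul_sub, Matrix.mul_one, Matrix.sub_mul, hUU, ← hspec]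
  have hdet1 : (1 - H).det = ∏ i, (1 - lam i) := by
    rw [hsub, Matrix.det_mul, Matrix.det_mul]
    have : (U : Matrix (Fin m) (Fin m) ℝ).det * ((1:Matrix (Fin m) (Fin m) ℝ) - D).det
        * (star (U : Matrix (Fin m) (Fin m) ℝ)).det
        = ((U : Matrix (Fin m) (Fin m) ℝ).det * (star (U : Matrix (Fin m) (Fin m) ℝ)).det)
          * ((1:Matrix (Fin m) (Fin m) ℝ) - D).det := by ring
    have hone : (1 : Matrix (Fin m) (Fin m) ℝ) - Matrix.diagonal lam
        = Matrix.diagonal (fun i => 1 - lam i) := by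
      rw [← Matrix.diagonal_one, Matrix.diagonal_sub]
    rw [this, ← Matrix.det_mul, hUU, Matrix.det_one, one_mul, hDlam, hone, Matrix.det_diagonal]
  -- scalar inequality on eigenvalues
  set M := (m:ℝ) with hMdef
  have hM : (3:ℝ) ≤ M := by rw [hMdef]; exact_mod_cast hm
  have hM0 : (0:ℝ) < M := by linarith
  have hM1 : (0:ℝ) < M - 1 := by linarith
  have hsum_le : ∑ i, lam i ≤ 1 := by rw [← htrace]; exact htr
  obtain ⟨hlt1, hineq, hstrict⟩ := bcg_scalar m hm lam hlampos hsum_le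
  have hQpos : 0 < ∏ i, (1 - lam i) := Finset.prod_pos (fun i _ => by linarith [hlt1 i])
  have hPpos : 0 < ∏ i, lam i := Finset.prod_pos (fun i _ => hlampos i)
  obtain ⟨hconv_le, hconv_lt⟩ :=
    bcg_sqrt_form m hm (∏ i, lam i) (∏ i, (1 - lam i)) (le_of_lt hPpos) hQpos
  constructor
  · rw [hdet, hdet1]
    exact hconv_le hineq
  constructor
  · intro hEq
    have hall : ∀ i, lam i = 1/(m:ℝ) := by
      by_contra hcon
      push_neg at hcon
      have hlt := hconv_lt (hstrict hcon)
      rw [hdet, hdet1] at hEq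
      rw [hEq] at hlt
      exact lt_irrefl _ hlt
    have hDval : D = (m:ℝ)⁻¹ • (1 : Matrix (Fin m) (Fin m) ℝ) := by
      rw [hDlam]
      have h1 : lam = fun _ => (m:ℝ)⁻¹ := funext fun i => by rw [hall i, one_div]
      rw [h1]
      have h2 : (fun _ : Fin m => (m:ℝ)⁻¹) = (m:ℝ)⁻¹ • (fun _ : Fin m => (1:ℝ)) := by
        funext i; simp
      rw [h2, Matrix.diagonal_smul, Matrix.diagonal_one]
    rw [hspec, hDval, Matrix.mul_smul, Matrix.smul_mul, Matrix.mul_one, hUU]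
  · intro hHval
    rw [hHval]
    have hd1 : ((m:ℝ)⁻¹ • (1 : Matrix (Fin m) (Fin m) ℝ)).det = (M⁻¹)^m := by
      rw [Matrix.det_smul, Matrix.det_one, mul_one, Fintype.card_fin, hMdef]
    have hsub1 : (1 : Matrix (Fin m) (Fin m) ℝ) - (m:ℝ)⁻¹ • 1
        = (1 - (m:ℝ)⁻¹) • (1 : Matrix (Fin m) (Fin m) ℝ) := by
      rw [sub_smul, one_smul]
    have hd2 : ((1 : Matrix (Fin m) (Fin m) ℝ) - (m:ℝ)⁻¹ • 1).det = (1 - M⁻¹)^m := by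
      rw [hsub1, Matrix.det_smul, Matrix.det_one, mul_one, Fintype.card_fin, hMdef]
    rw [hd1, hd2]
    set X := M^((m:ℝ)/2) with hXdef
    have hXpos : 0 < X := Real.rpow_pos_of_pos hM0 _
    have hX : X * X = M^m := by
      rw [hXdef, ← Real.rpow_add hM0]
      have he : (m:ℝ)/2 + (m:ℝ)/2 = ((m:ℕ):ℝ) := by ring
      rw [he, Real.rpow_natCast]
    have hsqrt : Real.sqrt ((M⁻¹)^m) = X⁻¹ := by
      rw [inv_pow, Real.sqrt_inv]
      congr 1
      rw [← Real.rpow_natCast M m, Real.sqrt_eq_rpow, ← Real.rpow_mul (le_of_lt hM0)]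
      rw [hXdef]
      congr 1
      ring
    rw [hsqrt]
    have hfrac : (1 - M⁻¹) = (M-1)/M := by
      field_simp
    rw [hfrac, div_pow]
    have hfin : X⁻¹ / ((M-1)^m / M^m) = M^m / (X * (M-1)^m) := by
      rw [div_div_eq_mul_div, inv_mul_eq_div, div_div]
    rw [hfin, ← hX, mul_div_mul_left _ _ (ne_of_gt hXpos)]
end

section
/- Let $m \geq 3$. For every $\eta > 0$ there exists $\epsilon > 0$ such that for every positive definite symmetric $m \times m$ real matrix $H$ with $\operatorname{tr}(H) \leq 1$, if $\frac{(\det H)^{1/2}}{\det(I-H)} \geq \frac{m^{m/2}}{(m-1)^m} - \epsilon$, then $\|H - \frac{1}{m} I\| \leq \eta$ (in the operator norm). -/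
noncomputable def gfun (x : ℝ) : ℝ := x / (1 - x)^2

lemma gfun_zero : gfun 0 = 0 := by
  unfold gfun
  norm_num

lemma gfun_nonneg {x : ℝ} (hx : 0 ≤ x) : 0 ≤ gfun x := by
  unfold gfun; positivity

lemma gfun_pos {x : ℝ} (hx : 0 < x) (hx1 : x < 1) : 0 < gfun x := by
  unfold gfun
  apply div_pos hx
  have : 1 - x > 0 := by linarith
  positivity

lemma gfun_lt {x y : ℝ} (hx : 0 ≤ x) (hxy : x < y) (hy : y < 1) : gfun x < gfun y := by
  unfold gfun
  rw [div_lt_div_iff₀ (by nlinarith) (by nlinarith)]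
  have hy0 : 0 < y := lt_of_le_of_lt hx hxy
  have h1 : x*y < y*y := mul_lt_mul_of_pos_right hxy hy0
  have h2 : x*y < 1 := by nlinarith
  have h3 : 0 < (y - x) * (1 - x*y) := mul_pos (by linarith) (by linarith)
  nlinarith

/-- smoothing: replacing an unequal pair of small sum by its mean strictly increases the
product of `gfun`s. -/
lemma gfun_smooth {a b : ℝ} (ha : 0 ≤ a) (hab : a < b) (hs : a + b ≤ 4/5) :
    gfun a * gfun b < gfun ((a+b)/2) ^ 2 := by
  set c : ℝ := 1 - a - b with hc
  have hcpos : 0 < c := by linarith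
  set p : ℝ := a * b with hp
  set q : ℝ := ((a+b)/2)^2 with hq
  have hpq : p < q := by nlinarith [sq_nonneg (b - a)]
  have hqc : q ≤ c := by nlinarith
  have hp0 : 0 ≤ p := by nlinarith
  have hq0 : 0 < q := by nlinarith
  have hcq : p*q < c*c := by nlinarith
  have key : p * (c + q)^2 < q * (c + p)^2 := by
    nlinarith [mul_pos (sub_pos.mpr hpq) (sub_pos.mpr hcq)]
  have hd1 : ((1:ℝ)-a)^2 * ((1:ℝ)-b)^2 = (c+p)^2 := by rw [hp, hc]; ring
  have e1 : gfun a * gfun b = p / (c + p)^2 := by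
    unfold gfun
    rw [div_mul_div_comm, hd1, ← hp]
  have hd2 : ((1:ℝ) - (a+b)/2)^2 = c + q := by rw [hq, hc]; ring
  have e2 : gfun ((a+b)/2) ^ 2 = q / (c + q)^2 := by
    unfold gfun
    rw [div_pow, hd2, ← hq]
  rw [e1, e2]
  rw [div_lt_div_iff₀ (by positivity) (by positivity)]
  exact key

lemma gfun_prod_eq {m : ℕ} (lam : Fin m → ℝ) :
    ∏ i, gfun (lam i) = (∏ i, lam i) / (∏ i, (1 - lam i))^2 := by
  unfold gfun
  rw [← Finset.prod_pow, ← Finset.prod_div_distrib]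

lemma weierstrass {ι : Type*} (s : Finset ι) (f : ι → ℝ) (h0 : ∀ i ∈ s, 0 ≤ f i)
    (h1 : ∀ i ∈ s, f i ≤ 1) : 1 - ∑ i ∈ s, f i ≤ ∏ i ∈ s, (1 - f i) := by
  induction s using Finset.cons_induction with
  | empty => simp
  | cons a s ha ih =>
    rw [Finset.sum_cons, Finset.prod_cons]
    have h0' : ∀ i ∈ s, 0 ≤ f i := fun i hi => h0 i (Finset.mem_cons_of_mem hi)
    have h1' : ∀ i ∈ s, f i ≤ 1 := fun i hi => h1 i (Finset.mem_cons_of_mem hi)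
    have ihs := ih h0' h1'
    have ha0 : 0 ≤ f a := h0 a (Finset.mem_cons_self a s)
    have ha1 : f a ≤ 1 := h1 a (Finset.mem_cons_self a s)
    have hsum0 : 0 ≤ ∑ i ∈ s, f i := Finset.sum_nonneg h0'
    have hprod0 : 0 ≤ ∏ i ∈ s, (1 - f i) := Finset.prod_nonneg (fun i hi => by linarith [h1' i hi])
    nlinarith

lemma amgm_prod {ι : Type*} (s : Finset ι) (f : ι → ℝ) (hf : ∀ i ∈ s, 0 ≤ f i)
    (hs : s.Nonempty) : ∏ i ∈ s, f i ≤ ((∑ i ∈ s, f i) / s.card)^(s.card) := by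
  set k : ℕ := s.card with hk
  have hk0 : 0 < k := Finset.card_pos.mpr hs
  have hkR : (0:ℝ) < k := by exact_mod_cast hk0
  have hw : ∑ _i ∈ s, (k:ℝ)⁻¹ = 1 := by
    rw [Finset.sum_const, nsmul_eq_mul, ← hk]
    field_simp
  have hgm := Real.geom_mean_le_arith_mean_weighted s (fun _ => (k:ℝ)⁻¹) f
    (fun i _ => by positivity) hw hf
  have e1 : ∀ i ∈ s, (f i ^ ((k:ℝ)⁻¹))^(k:ℕ) = f i := by
    intro i hi
    rw [← Real.rpow_natCast (f i ^ ((k:ℝ)⁻¹)) k, ← Real.rpow_mul (hf i hi)]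
    rw [inv_mul_cancel₀ (by positivity), Real.rpow_one]
  calc ∏ i ∈ s, f i = ∏ i ∈ s, (f i ^ ((k:ℝ)⁻¹))^(k:ℕ) := by
        apply Finset.prod_congr rfl
        intro i hi; rw [e1 i hi]
    _ = (∏ i ∈ s, f i ^ ((k:ℝ)⁻¹))^(k:ℕ) := by rw [Finset.prod_pow]
    _ ≤ ((∑ i ∈ s, f i) / k)^(k:ℕ) := by
        apply pow_le_pow_left₀ (Finset.prod_nonneg (fun i hi => Real.rpow_nonneg (hf i hi) _))
        calc ∏ i ∈ s, f i ^ ((k:ℝ)⁻¹) ≤ ∑ i ∈ s, (k:ℝ)⁻¹ * f i := hgm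
          _ = (∑ i ∈ s, f i) / k := by rw [← Finset.mul_sum]; field_simp


/-- Key numeric estimate: `(3/10)^(m-3) * (m-1)^(m+1) < (7/10) * m^m` for `m ≥ 3`. -/
lemma claimC (m : ℕ) (hm : 3 ≤ m) :
    (3/10:ℝ)^(m-3) * ((m:ℝ)-1)^(m+1) < (7/10) * (m:ℝ)^m := by
  induction m, hm using Nat.le_induction with
  | base =>
    norm_num
  | succ m hm ih =>
    have ihm := ih
    have hx3 : (3:ℝ) ≤ (m:ℝ) := by exact_mod_cast hm
    set x : ℝ := (m:ℝ) with hxdef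
    have hx0 : 0 < x := by linarith
    have hx1 : (0:ℝ) < x - 1 := by linarith
    -- Bernoulli step : (3/10) * (x^2)^(m+1) ≤ (x^2-1)^(m+1)
    have hbern : (3/10) * (x^2)^(m+1) ≤ (x^2-1)^(m+1) := by
      have h1 : (1 : ℝ) + ((m+1:ℕ):ℝ) * (-(x^2)⁻¹) ≤ (1 + (-(x^2)⁻¹))^(m+1) := by
        apply one_add_mul_le_pow
        have : (x^2)⁻¹ ≤ 1 := by
          rw [inv_le_one₀ (by positivity)]
          nlinarith
        linarith
      push_cast at h1
      have h2 : ((x^2) * (1 + (-(x^2)⁻¹)))^(m+1) = (x^2-1)^(m+1) := by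
        congr 1
        field_simp
        ring
      have h3 : (x^2)^(m+1) * (1 + (-(x^2)⁻¹))^(m+1) = (x^2-1)^(m+1) := by
        rw [← mul_pow]; exact h2
      have h4 : (3/10 : ℝ) ≤ 1 + (m+1) * (-(x^2)⁻¹) := by
        have hle : ((m:ℝ)+1) * (x^2)⁻¹ ≤ 7/10 := by
          rw [← hxdef]
          have h10 : 10 * (x + 1) ≤ 7 * x^2 := by nlinarith
          rw [mul_inv_le_iff₀ (by positivity)]
          nlinarith
        have : ((m:ℝ)+1) * (-(x^2)⁻¹) = -(((m:ℝ)+1) * (x^2)⁻¹) := by ring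
        rw [this]
        linarith
      calc (3/10) * (x^2)^(m+1) ≤ (1 + (m+1) * (-(x^2)⁻¹)) * (x^2)^(m+1) := by
            apply mul_le_mul_of_nonneg_right h4 (by positivity)
        _ ≤ (1 + (-(x^2)⁻¹))^(m+1) * (x^2)^(m+1) := by
            apply mul_le_mul_of_nonneg_right h1 (by positivity)
        _ = (x^2-1)^(m+1) := by rw [mul_comm]; exact h3
    -- main multiplication step
    have hsub1 : (m+1) - 3 = (m - 3) + 1 := by omega
    have hpow1 : (3/10:ℝ)^((m+1)-3) = (3/10:ℝ)^(m-3) * (3/10) := by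
      rw [hsub1, pow_succ]
    have hcast : ((m:ℝ)+1) = ((m+1 : ℕ) : ℝ) := by push_cast; ring
    -- goal : (3/10)^(m+1-3) * x^(m+2) < (7/10) * (x+1)^(m+1)
    have hgoal : (3/10:ℝ)^((m+1)-3) * x^(m+2) < (7/10) * (x+1)^(m+1) := by
      have hfac : (0:ℝ) < (x-1)^(m+1) := pow_pos hx1 _
      rw [← mul_lt_mul_iff_left₀ hfac]
      have lhs_eq : (3/10:ℝ)^((m+1)-3) * x^(m+2) * (x-1)^(m+1)
          = (3/10) * x^(m+2) * ((3/10:ℝ)^(m-3) * (x-1)^(m+1)) := by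
        rw [hpow1]; ring
      have step1 : (3/10:ℝ) * x^(m+2) * ((3/10:ℝ)^(m-3) * (x-1)^(m+1))
          < (3/10) * x^(m+2) * ((7/10) * x^m) := by
        apply mul_lt_mul_of_pos_left _ (by positivity)
        exact ihm
      have step2 : (3/10:ℝ) * x^(m+2) * ((7/10) * x^m) = (7/10) * ((3/10) * (x^2)^(m+1)) := by
        rw [← pow_mul]
        rw [show 2 * (m+1) = (m+2) + m by ring, pow_add]
        ring
      have step3 : (7/10:ℝ) * ((3/10) * (x^2)^(m+1)) ≤ (7/10) * (x^2-1)^(m+1) := by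
        apply mul_le_mul_of_nonneg_left hbern (by norm_num)
      have step4 : (7/10:ℝ) * (x^2-1)^(m+1) = (7/10) * (x+1)^(m+1) * (x-1)^(m+1) := by
        rw [mul_assoc, ← mul_pow]
        congr 2
        ring
      calc (3/10:ℝ)^((m+1)-3) * x^(m+2) * (x-1)^(m+1)
          = (3/10) * x^(m+2) * ((3/10:ℝ)^(m-3) * (x-1)^(m+1)) := lhs_eq
        _ < (3/10) * x^(m+2) * ((7/10) * x^m) := step1
        _ = (7/10) * ((3/10) * (x^2)^(m+1)) := step2
        _ ≤ (7/10) * (x^2-1)^(m+1) := step3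
        _ = (7/10) * (x+1)^(m+1) * (x-1)^(m+1) := step4
    -- now rewrite casts
    push_cast
    push_cast at hgoal
    convert hgoal using 2 <;> push_cast <;> ring


lemma chain_base (m : ℕ) (hm : 3 ≤ m) (lam : Fin m → ℝ) (hnn : ∀ i, 0 ≤ lam i)
    (hsum : ∑ i, lam i ≤ 1) (i₁ : Fin m) (hbpos : 0 < lam i₁) (hblt : lam i₁ < 1) :
    ∏ i, gfun (lam i) ≤ (1 - lam i₁)^(m-3) / (((m:ℝ)-1)^(m-1) * lam i₁) := by
  set b : ℝ := lam i₁ with hbdef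
  set R : Finset (Fin m) := Finset.univ.erase i₁ with hR
  have hcardR : R.card = m - 1 := by
    rw [hR, Finset.card_erase_of_mem (Finset.mem_univ i₁), Finset.card_univ, Fintype.card_fin]
  have hRne : R.Nonempty := by
    rw [← Finset.card_pos, hcardR]; omega
  have hm1R : (0:ℝ) < (m:ℝ) - 1 := by
    have : (3:ℝ) ≤ (m:ℝ) := by exact_mod_cast hm
    linarith
  have hcast : ((m - 1 : ℕ) : ℝ) = (m:ℝ) - 1 := by
    have h1 : 1 ≤ m := by omega
    push_cast [h1]
    ring
  have hsplit : b + ∑ i ∈ R, lam i = ∑ i, lam i := Finset.add_sum_erase _ _ (Finset.mem_univ i₁)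
  have hs'0 : 0 ≤ ∑ i ∈ R, lam i := Finset.sum_nonneg (fun i _ => hnn i)
  have hs'le : ∑ i ∈ R, lam i ≤ 1 - b := by linarith
  have hle1 : ∀ i, lam i ≤ 1 := by
    intro i
    calc lam i ≤ ∑ j, lam j := Finset.single_le_sum (fun j _ => hnn j) (Finset.mem_univ i)
      _ ≤ 1 := hsum
  have hb1 : 0 < 1 - b := by linarith [hblt]
  -- numerator bound
  have hNsplit : ∏ i, lam i = b * ∏ i ∈ R, lam i :=
    (Finset.mul_prod_erase _ _ (Finset.mem_univ i₁)).symm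
  have hamgm : ∏ i ∈ R, lam i ≤ ((1-b)/((m:ℝ)-1))^(m-1) := by
    calc ∏ i ∈ R, lam i ≤ ((∑ i ∈ R, lam i) / R.card)^(R.card) :=
          amgm_prod R lam (fun i _ => hnn i) hRne
      _ ≤ ((1-b)/((m:ℝ)-1))^(m-1) := by
          rw [hcardR, hcast]
          apply pow_le_pow_left₀ (by positivity)
          gcongr
  have hN : ∏ i, lam i ≤ b * ((1-b)/((m:ℝ)-1))^(m-1) := by
    rw [hNsplit]
    exact mul_le_mul_of_nonneg_left hamgm (le_of_lt hbpos)
  -- denominator bound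
  have hPsplit : ∏ i, (1 - lam i) = (1-b) * ∏ i ∈ R, (1 - lam i) :=
    (Finset.mul_prod_erase _ _ (Finset.mem_univ i₁)).symm
  have hweier : b ≤ ∏ i ∈ R, (1 - lam i) := by
    have := weierstrass R lam (fun i _ => hnn i) (fun i _ => hle1 i)
    linarith
  have hP : (1-b) * b ≤ ∏ i, (1 - lam i) := by
    rw [hPsplit]
    exact mul_le_mul_of_nonneg_left hweier (le_of_lt hb1)
  have hPpos : (0:ℝ) < (1-b) * b := mul_pos hb1 hbpos
  have hN0 : 0 ≤ ∏ i, lam i := Finset.prod_nonneg (fun i _ => hnn i)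
  rw [gfun_prod_eq]
  have hstep : (∏ i, lam i) / (∏ i, (1 - lam i))^2
      ≤ (b * ((1-b)/((m:ℝ)-1))^(m-1)) / ((1-b)*b)^2 := by
    apply div_le_div₀ (by positivity) hN (by positivity)
    apply pow_le_pow_left₀ (le_of_lt hPpos) hP
  refine le_trans hstep (le_of_eq ?_)
  have epow : (1-b)^(m-1) = (1-b)^(m-3)*(1-b)^2 := by
    rw [← pow_add]
    congr 1
    omega
  rw [div_pow, epow]
  field_simp

lemma phi_lt_M2 (m : ℕ) (hm : 3 ≤ m) (b : ℝ) (hb0 : 0 < b)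
    (hb : (1-b)^(m-3) * ((m:ℝ)-1)^(m+1) < (m:ℝ)^m * b) :
    (1-b)^(m-3) / (((m:ℝ)-1)^(m-1) * b) < (m:ℝ)^m / ((m:ℝ)-1)^(m*2) := by
  have hm1R : (0:ℝ) < (m:ℝ) - 1 := by
    have : (3:ℝ) ≤ (m:ℝ) := by exact_mod_cast hm
    linarith
  rw [div_lt_div_iff₀ (by positivity) (by positivity)]
  have e : ((m:ℝ)-1)^(m*2) = ((m:ℝ)-1)^(m+1) * ((m:ℝ)-1)^(m-1) := by
    rw [← pow_add]
    congr 1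
    omega
  calc (1-b)^(m-3) * ((m:ℝ)-1)^(m*2)
      = ((1-b)^(m-3) * ((m:ℝ)-1)^(m+1)) * ((m:ℝ)-1)^(m-1) := by rw [e]; ring
    _ < ((m:ℝ)^m * b) * ((m:ℝ)-1)^(m-1) := by
        apply mul_lt_mul_of_pos_right hb (by positivity)
    _ = (m:ℝ)^m * (((m:ℝ)-1)^(m-1) * b) := by ring

lemma UB_lt_M2 (m : ℕ) (hm : 3 ≤ m) :
    (3/10:ℝ)^(m-3) / (((m:ℝ)-1)^(m-1) * (7/10)) < (m:ℝ)^m / ((m:ℝ)-1)^(m*2) := by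
  have hm1R : (0:ℝ) < (m:ℝ) - 1 := by
    have : (3:ℝ) ≤ (m:ℝ) := by exact_mod_cast hm
    linarith
  rw [div_lt_div_iff₀ (by positivity) (by positivity)]
  have e : ((m:ℝ)-1)^(m*2) = ((m:ℝ)-1)^(m+1) * ((m:ℝ)-1)^(m-1) := by
    rw [← pow_add]; congr 1; omega
  have hC := claimC m hm
  calc (3/10:ℝ)^(m-3) * ((m:ℝ)-1)^(m*2)
      = ((3/10:ℝ)^(m-3) * ((m:ℝ)-1)^(m+1)) * ((m:ℝ)-1)^(m-1) := by rw [e]; ring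
    _ < ((7/10) * (m:ℝ)^m) * ((m:ℝ)-1)^(m-1) := by
        apply mul_lt_mul_of_pos_right hC (by positivity)
    _ = (m:ℝ)^m * (((m:ℝ)-1)^(m-1) * (7/10)) := by ring

lemma phi_le_UB (m : ℕ) (hm : 3 ≤ m) (b : ℝ) (hb7 : 7/10 ≤ b) (hb1 : b ≤ 1) :
    (1-b)^(m-3) / (((m:ℝ)-1)^(m-1) * b) ≤ (3/10:ℝ)^(m-3) / (((m:ℝ)-1)^(m-1) * (7/10)) := by
  have hm1R : (0:ℝ) < (m:ℝ) - 1 := by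
    have : (3:ℝ) ≤ (m:ℝ) := by exact_mod_cast hm
    linarith
  apply div_le_div₀ (by positivity) (pow_le_pow_left₀ (by linarith) (by linarith) _) (by positivity)
  have hb0 : (0:ℝ) < 7/10 := by norm_num
  apply mul_le_mul_of_nonneg_left hb7 (by positivity)


def Kset (m : ℕ) : Set (Fin m → ℝ) :=
  {l | (∀ i, 0 ≤ l i ∧ l i ≤ 7/10) ∧ ∑ i, l i ≤ 1}

noncomputable def Gfn (m : ℕ) : (Fin m → ℝ) → ℝ := fun l => ∏ i, gfun (l i)

lemma center_mem_Kset (m : ℕ) (hm : 3 ≤ m) : (fun _ => (m:ℝ)⁻¹) ∈ Kset m := by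
  have hmR : (3:ℝ) ≤ (m:ℝ) := by exact_mod_cast hm
  have hm0 : (0:ℝ) < (m:ℝ) := by linarith
  refine ⟨fun i => ⟨by positivity, ?_⟩, ?_⟩
  · rw [inv_le_comm₀ hm0 (by norm_num)]
    linarith
  · rw [Finset.sum_const, Finset.card_univ, Fintype.card_fin, nsmul_eq_mul,
      mul_inv_cancel₀ (ne_of_gt hm0)]

lemma Gfn_center (m : ℕ) (hm : 3 ≤ m) :
    Gfn m (fun _ => (m:ℝ)⁻¹) = (m:ℝ)^m / ((m:ℝ)-1)^(m*2) := by
  have hmR : (3:ℝ) ≤ (m:ℝ) := by exact_mod_cast hm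
  have hm0 : (0:ℝ) < (m:ℝ) := by linarith
  have hm1 : (0:ℝ) < (m:ℝ) - 1 := by linarith
  unfold Gfn
  rw [Finset.prod_const, Finset.card_univ, Fintype.card_fin]
  have hg : gfun ((m:ℝ)⁻¹) = (m:ℝ) / ((m:ℝ)-1)^2 := by
    unfold gfun
    have hpos1 : (0:ℝ) < (1 - (m:ℝ)⁻¹)^2 := by
      have h1 : (m:ℝ)⁻¹ ≤ 1/3 := by
        rw [inv_le_comm₀ hm0 (by norm_num)]
        linarith
      nlinarith
    rw [div_eq_div_iff (ne_of_gt hpos1) (ne_of_gt (pow_pos hm1 2))]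
    have hinv : (1 - (m:ℝ)⁻¹) = ((m:ℝ) - 1) / (m:ℝ) := by field_simp
    rw [hinv]
    field_simp
  rw [hg, div_pow, ← pow_mul]
  congr 2
  omega

lemma max_eq_center (m : ℕ) (hm : 3 ≤ m) (μ : Fin m → ℝ) (hμK : μ ∈ Kset m)
    (hmax : ∀ l ∈ Kset m, Gfn m l ≤ Gfn m μ) : μ = fun _ => (m:ℝ)⁻¹ := by
  obtain ⟨hμbd, hμsum⟩ := hμK
  have hmR : (3:ℝ) ≤ (m:ℝ) := by exact_mod_cast hm
  have hm0 : (0:ℝ) < (m:ℝ) := by linarith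
  have hm1 : (0:ℝ) < (m:ℝ) - 1 := by linarith
  set M2 : ℝ := (m:ℝ)^m / ((m:ℝ)-1)^(m*2) with hM2def
  have hM2pos : 0 < M2 := by positivity
  have hGμ : M2 ≤ Gfn m μ := by
    rw [hM2def, ← Gfn_center m hm]
    exact hmax _ (center_mem_Kset m hm)
  -- positivity of coordinates
  have hμpos : ∀ i, 0 < μ i := by
    intro i
    rcases lt_or_eq_of_le (hμbd i).1 with h | h
    · exact h
    · exfalso
      have : Gfn m μ = 0 := by
        unfold Gfn
        apply Finset.prod_eq_zero (Finset.mem_univ i)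
        rw [← h, gfun_zero]
      rw [this] at hGμ
      linarith
  have hμlt1 : ∀ i, μ i < 1 := fun i => lt_of_le_of_lt (hμbd i).2 (by norm_num)
  have hgpos : ∀ i, 0 < gfun (μ i) := fun i => gfun_pos (hμpos i) (hμlt1 i)
  -- sum equals 1
  have hsum1 : ∑ i, μ i = 1 := by
    by_contra hne
    have hlt : ∑ i, μ i < 1 := lt_of_le_of_ne hμsum hne
    have hex : ∃ i, μ i < 7/10 := by
      by_contra hco
      push_neg at hco
      have h1 : (m:ℝ) * (7/10) ≤ ∑ i, μ i := by
        calc (m:ℝ) * (7/10) = ∑ _i : Fin m, (7/10 : ℝ) := by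
              rw [Finset.sum_const, Finset.card_univ, Fintype.card_fin, nsmul_eq_mul]
          _ ≤ ∑ i, μ i := Finset.sum_le_sum (fun i _ => hco i)
      nlinarith
    obtain ⟨i, hi7⟩ := hex
    set t : ℝ := min (7/10) (μ i + (1 - ∑ k, μ k)) with htdef
    have hti : μ i < t := lt_min hi7 (by linarith)
    have ht7 : t ≤ 7/10 := min_le_left _ _
    have htr : t ≤ μ i + (1 - ∑ k, μ k) := min_le_right _ _
    set ν : Fin m → ℝ := Function.update μ i t with hνdef
    have hνK : ν ∈ Kset m := by
      constructor
      · intro k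
        rw [hνdef, Function.update_apply]
        split
        · constructor
          · linarith [(hμbd i).1]
          · exact ht7
        · exact hμbd k
      · have hsν : ∑ k, ν k = t + ∑ k ∈ Finset.univ.erase i, μ k := by
          have e1 := Finset.sum_update_of_mem (Finset.mem_univ i) μ t
          rw [Finset.sdiff_singleton_eq_erase] at e1
          rw [hνdef, e1]
        have hsμ : μ i + ∑ k ∈ Finset.univ.erase i, μ k = ∑ k, μ k :=
          Finset.add_sum_erase _ _ (Finset.mem_univ i)
        rw [hsν]
        linarith
    have hGν : Gfn m ν = gfun t * ∏ k ∈ Finset.univ.erase i, gfun (μ k) := by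
      unfold Gfn
      rw [hνdef]
      have : (fun k => gfun (Function.update μ i t k)) =
          Function.update (fun k => gfun (μ k)) i (gfun t) := by
        funext k
        simp only [Function.update_apply]
        split <;> rfl
      calc ∏ k, gfun (Function.update μ i t k)
          = ∏ k, Function.update (fun k => gfun (μ k)) i (gfun t) k := by rw [this]
        _ = gfun t * ∏ k ∈ Finset.univ.erase i, gfun (μ k) := by
            have e1 := Finset.prod_update_of_mem (Finset.mem_univ i) (fun k => gfun (μ k)) (gfun t)
            rw [Finset.sdiff_singleton_eq_erase] at e1
            rw [e1]
    have hGμ2 : Gfn m μ = gfun (μ i) * ∏ k ∈ Finset.univ.erase i, gfun (μ k) :=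
      (Finset.mul_prod_erase _ _ (Finset.mem_univ i)).symm
    have hrest : 0 < ∏ k ∈ Finset.univ.erase i, gfun (μ k) :=
      Finset.prod_pos (fun k _ => hgpos k)
    have : Gfn m μ < Gfn m ν := by
      rw [hGν, hGμ2]
      apply mul_lt_mul_of_pos_right _ hrest
      exact gfun_lt (hμbd i).1 hti (lt_of_le_of_lt ht7 (by norm_num))
    linarith [hmax ν hνK]
  -- smoothing
  have hsmooth : ∀ i j : Fin m, i ≠ j → μ i < μ j → μ i + μ j ≤ 4/5 → False := by
    intro i j hij hlt hs45
    set t : ℝ := (μ i + μ j)/2 with htdef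
    have ht0 : 0 ≤ t := by
      have h1 := (hμbd i).1
      have h2 := (hμbd j).1
      rw [htdef]; linarith
    have ht7 : t ≤ 7/10 := by
      have h2 := (hμbd j).2
      rw [htdef]; linarith
    have hiej : i ∈ Finset.univ.erase j := Finset.mem_erase.mpr ⟨hij, Finset.mem_univ i⟩
    set ν : Fin m → ℝ := Function.update (Function.update μ i t) j t with hνdef
    have hνapp : ∀ k, ν k = if k = j then t else if k = i then t else μ k := by
      intro k
      rw [hνdef, Function.update_apply, Function.update_apply]
    -- sum of ν
    have hsplitμ : ∑ k, μ k = μ j + (μ i + ∑ k ∈ (Finset.univ.erase j).erase i, μ k) := by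
      rw [Finset.add_sum_erase _ _ hiej, Finset.add_sum_erase _ _ (Finset.mem_univ j)]
    have hsumν : ∑ k, ν k = t + (t + ∑ k ∈ (Finset.univ.erase j).erase i, μ k) := by
      have e1 := Finset.sum_update_of_mem (Finset.mem_univ j) (Function.update μ i t) t
      have e2 := Finset.sum_update_of_mem hiej μ t
      rw [Finset.sdiff_singleton_eq_erase] at e1 e2
      rw [hνdef, e1, e2]
    have hνK : ν ∈ Kset m := by
      constructor
      · intro k
        rw [hνapp k]
        split
        · exact ⟨ht0, ht7⟩
        · split
          · exact ⟨ht0, ht7⟩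
          · exact hμbd k
      · rw [hsumν]
        have : t + (t + ∑ k ∈ (Finset.univ.erase j).erase i, μ k) = ∑ k, μ k := by
          rw [hsplitμ, htdef]; ring
        rw [this]
        exact hμsum
    -- products
    have hprodμ : Gfn m μ
        = gfun (μ j) * (gfun (μ i) * ∏ k ∈ (Finset.univ.erase j).erase i, gfun (μ k)) := by
      unfold Gfn
      have h1 : ∏ k, gfun (μ k) = gfun (μ j) * ∏ k ∈ Finset.univ.erase j, gfun (μ k) :=
        (Finset.mul_prod_erase _ _ (Finset.mem_univ j)).symm
      have h2 : ∏ k ∈ Finset.univ.erase j, gfun (μ k)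
          = gfun (μ i) * ∏ k ∈ (Finset.univ.erase j).erase i, gfun (μ k) :=
        (Finset.mul_prod_erase _ _ hiej).symm
      rw [h1, h2]
    have einner : (fun k => gfun (Function.update μ i t k)) =
        Function.update (fun k => gfun (μ k)) i (gfun t) := by
      funext k
      simp only [Function.update_apply]
      split <;> rfl
    have eouter : (fun k => gfun (ν k)) =
        Function.update (fun k => gfun (Function.update μ i t k)) j (gfun t) := by
      funext k
      rw [hνdef]
      simp only [Function.update_apply]
      split <;> rfl
    have hprodν : Gfn m ν
        = gfun t * (gfun t * ∏ k ∈ (Finset.univ.erase j).erase i, gfun (μ k)) := by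
      unfold Gfn
      calc ∏ k, gfun (ν k)
          = ∏ k, Function.update (fun k => gfun (Function.update μ i t k)) j (gfun t) k := by
            rw [← eouter]
        _ = gfun t * ∏ k ∈ Finset.univ.erase j, gfun (Function.update μ i t k) := by
            have e1 := Finset.prod_update_of_mem (Finset.mem_univ j)
              (fun k => gfun (Function.update μ i t k)) (gfun t)
            rw [Finset.sdiff_singleton_eq_erase] at e1
            rw [e1]
        _ = gfun t * ∏ k ∈ Finset.univ.erase j,
              Function.update (fun k => gfun (μ k)) i (gfun t) k := by rw [← einner]
        _ = gfun t * (gfun t * ∏ k ∈ (Finset.univ.erase j).erase i, gfun (μ k)) := by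
            have e2 := Finset.prod_update_of_mem hiej (fun k => gfun (μ k)) (gfun t)
            rw [Finset.sdiff_singleton_eq_erase] at e2
            rw [e2]
    have hrest : 0 < ∏ k ∈ (Finset.univ.erase j).erase i, gfun (μ k) :=
      Finset.prod_pos (fun k _ => hgpos k)
    have hkey : gfun (μ i) * gfun (μ j) < gfun t ^ 2 := by
      rw [htdef]
      exact gfun_smooth (hμbd i).1 hlt hs45
    have : Gfn m μ < Gfn m ν := by
      rw [hprodμ, hprodν]
      calc gfun (μ j) * (gfun (μ i) * ∏ k ∈ (Finset.univ.erase j).erase i, gfun (μ k))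
          = (gfun (μ i) * gfun (μ j)) * ∏ k ∈ (Finset.univ.erase j).erase i, gfun (μ k) := by
            ring
        _ < gfun t ^ 2 * ∏ k ∈ (Finset.univ.erase j).erase i, gfun (μ k) :=
            mul_lt_mul_of_pos_right hkey hrest
        _ = gfun t * (gfun t * ∏ k ∈ (Finset.univ.erase j).erase i, gfun (μ k)) := by
            ring
    linarith [hmax ν hνK]
  -- extremal coordinates
  obtain ⟨i₀, _, hmin⟩ := Finset.exists_min_image Finset.univ μ ⟨⟨0, by omega⟩, Finset.mem_univ _⟩
  obtain ⟨i₁, _, hmaxi⟩ := Finset.exists_max_image Finset.univ μ ⟨⟨0, by omega⟩, Finset.mem_univ _⟩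
  have hminle : ∀ k, μ i₀ ≤ μ k := fun k => hmin k (Finset.mem_univ k)
  have hmaxge : ∀ k, μ k ≤ μ i₁ := fun k => hmaxi k (Finset.mem_univ k)
  by_cases hab : μ i₀ = μ i₁
  · -- all coordinates equal, hence equal to 1/m
    have hall : ∀ k, μ k = μ i₀ := by
      intro k
      have h1 := hminle k
      have h2 := hmaxge k
      rw [hab] at h1 ⊢
      linarith
    have : ∑ k, μ k = (m:ℝ) * μ i₀ := by
      rw [Finset.sum_congr rfl (fun k _ => hall k), Finset.sum_const, Finset.card_univ,
        Fintype.card_fin, nsmul_eq_mul]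
    rw [hsum1] at this
    funext k
    rw [hall k]
    field_simp
    linarith [this]
  · exfalso
    have hlt : μ i₀ < μ i₁ := lt_of_le_of_ne (hminle i₁) hab
    have hne01 : i₀ ≠ i₁ := by
      intro h
      rw [h] at hab
      exact hab rfl
    have h45 : 4/5 < μ i₀ + μ i₁ := by
      by_contra hco
      push_neg at hco
      exact hsmooth i₀ i₁ hne01 hlt hco
    have ha1m : μ i₀ < (m:ℝ)⁻¹ := by
      by_contra hco
      push_neg at hco
      have hstrict : ∑ _k : Fin m, μ i₀ < ∑ k, μ k :=
        Finset.sum_lt_sum (fun k _ => hminle k) ⟨i₁, Finset.mem_univ i₁, hlt⟩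
      rw [Finset.sum_const, Finset.card_univ, Fintype.card_fin, nsmul_eq_mul, hsum1] at hstrict
      have : (1:ℝ) ≤ (m:ℝ) * μ i₀ := by
        calc (1:ℝ) = (m:ℝ) * (m:ℝ)⁻¹ := by field_simp
          _ ≤ (m:ℝ) * μ i₀ := mul_le_mul_of_nonneg_left hco (le_of_lt hm0)
      linarith
    have hallk : ∀ k, k ≠ i₁ → μ k = μ i₀ := by
      intro k hk
      by_contra hco
      have hik : μ i₀ < μ k := lt_of_le_of_ne (hminle k) (fun h => hco h.symm)
      have hki0 : i₀ ≠ k := by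
        intro h
        rw [← h] at hik
        exact lt_irrefl _ hik
      -- sum over the three element set
      have hsub : ({i₀, i₁, k} : Finset (Fin m)) ⊆ Finset.univ := Finset.subset_univ _
      have hsum3 : μ i₀ + μ i₁ + μ k ≤ ∑ l, μ l := by
        have hs3 : ∑ l ∈ ({i₀, i₁, k} : Finset (Fin m)), μ l = μ i₀ + μ i₁ + μ k := by
          rw [Finset.sum_insert, Finset.sum_insert, Finset.sum_singleton]
          · ring
          · simp only [Finset.mem_singleton]
            exact fun h => hk h.symm
          · simp only [Finset.mem_insert, Finset.mem_singleton]
            push_neg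
            exact ⟨hne01, hki0⟩
        rw [← hs3]
        apply Finset.sum_le_sum_of_subset_of_nonneg hsub
        intro l _ _
        exact (hμbd l).1
      rw [hsum1] at hsum3
      have hbound : μ i₀ + μ k ≤ 4/5 := by
        have h13 : (m:ℝ)⁻¹ ≤ 1/3 := by
          rw [inv_le_comm₀ hm0 (by norm_num)]
          linarith
        linarith
      exact hsmooth i₀ k hki0 hik hbound
    -- sum identity : 1 = μ i₁ + (m-1) * μ i₀
    have hsplitsum : ∑ k, μ k = μ i₁ + ∑ k ∈ Finset.univ.erase i₁, μ k :=
      (Finset.add_sum_erase _ _ (Finset.mem_univ i₁)).symm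
    have herase : ∑ k ∈ Finset.univ.erase i₁, μ k = ((m:ℝ) - 1) * μ i₀ := by
      rw [Finset.sum_congr rfl (fun k hk => hallk k (Finset.ne_of_mem_erase hk))]
      rw [Finset.sum_const, Finset.card_erase_of_mem (Finset.mem_univ i₁), Finset.card_univ,
        Fintype.card_fin, nsmul_eq_mul]
      congr 1
      have h1 : 1 ≤ m := by omega
      push_cast [h1]
      ring
    have hkeysum : 1 = μ i₁ + ((m:ℝ) - 1) * μ i₀ := by
      have := hsplitsum
      rw [hsum1, herase] at this
      linarith
    by_cases hm4 : 4 ≤ m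
    · -- m ≥ 4 : contradiction with μ i₁ ≤ 7/10
      have hm4R : (4:ℝ) ≤ (m:ℝ) := by exact_mod_cast hm4
      have h3a : 3 * μ i₀ ≤ ((m:ℝ) - 1) * μ i₀ :=
        mul_le_mul_of_nonneg_right (by linarith) (hμbd i₀).1
      have hb7 := (hμbd i₁).2
      linarith
    · -- m = 3
      have hm3 : m = 3 := by omega
      have hb35 : 3/5 < μ i₁ := by
        have : ((m:ℝ) - 1) = 2 := by rw [hm3]; norm_num
        rw [this] at hkeysum
        linarith
      have hb1 : μ i₁ < 1 := hμlt1 i₁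
      have hchain := chain_base m hm μ (fun i => (hμbd i).1) hμsum i₁ (hμpos i₁) hb1
      have hnum : (1 - μ i₁)^(m-3) * ((m:ℝ)-1)^(m+1) < (m:ℝ)^m * μ i₁ := by
        rw [hm3]
        norm_num
        linarith
      have hphi := phi_lt_M2 m hm (μ i₁) (hμpos i₁) hnum
      rw [hM2def] at hGμ
      have hGfn : Gfn m μ = ∏ i, gfun (μ i) := rfl
      rw [hGfn] at hGμ
      linarith


lemma Kset_compact (m : ℕ) : IsCompact (Kset m) := by
  have heq : Kset m = (Set.Icc (fun _ => (0:ℝ)) (fun _ => 7/10)) ∩ {l | ∑ i, l i ≤ 1} := by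
    ext l
    simp only [Kset, Set.mem_setOf_eq, Set.mem_inter_iff, Set.mem_Icc, Pi.le_def]
    constructor
    · rintro ⟨h1, h2⟩
      exact ⟨⟨fun i => (h1 i).1, fun i => (h1 i).2⟩, h2⟩
    · rintro ⟨⟨h1, h2⟩, h3⟩
      exact ⟨fun i => ⟨h1 i, h2 i⟩, h3⟩
  rw [heq]
  exact isCompact_Icc.inter_right
    (isClosed_le (continuous_finset_sum _ (fun i _ => continuous_apply i)) continuous_const)

lemma Gfn_contOn (m : ℕ) : ContinuousOn (Gfn m) (Kset m) := by
  apply continuousOn_finset_prod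
  intro i _
  unfold gfun
  apply ContinuousOn.div (continuous_apply i).continuousOn
    (((continuous_const.sub (continuous_apply i)).pow 2).continuousOn)
  intro l hl
  have h7 := (hl.1 i).2
  have : (0:ℝ) < (1 - l i)^2 := by nlinarith
  exact ne_of_gt this

lemma core_lt (m : ℕ) (hm : 3 ≤ m) (lam : Fin m → ℝ) (hlam : lam ∈ Kset m)
    (hne : lam ≠ fun _ => (m:ℝ)⁻¹) : Gfn m lam < (m:ℝ)^m / ((m:ℝ)-1)^(m*2) := by
  obtain ⟨μ, hμK, hμmax⟩ := (Kset_compact m).exists_isMaxOn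
    ⟨_, center_mem_Kset m hm⟩ (Gfn_contOn m)
  have hmax' : ∀ l ∈ Kset m, Gfn m l ≤ Gfn m μ := fun l hl => hμmax hl
  have hμc : μ = fun _ => (m:ℝ)⁻¹ := max_eq_center m hm μ hμK hmax'
  have hle : Gfn m lam ≤ (m:ℝ)^m / ((m:ℝ)-1)^(m*2) := by
    rw [← Gfn_center m hm, ← hμc]
    exact hmax' lam hlam
  rcases lt_or_eq_of_le hle with h | h
  · exact h
  · exfalso
    apply hne
    apply max_eq_center m hm lam hlam
    intro l hl
    rw [h, ← Gfn_center m hm, ← hμc]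
    exact hmax' l hl


lemma eig_trace {m : ℕ} (H : Matrix (Fin m) (Fin m) ℝ) (hH : H.IsHermitian) :
    H.trace = ∑ i, hH.eigenvalues i := by
  set U : Matrix (Fin m) (Fin m) ℝ := (hH.eigenvectorUnitary : Matrix (Fin m) (Fin m) ℝ) with hU
  have hUU : star U * U = 1 := (Matrix.mem_unitaryGroup_iff').mp (hH.eigenvectorUnitary).2
  conv_lhs => rw [hH.spectral_theorem]
  rw [Unitary.conjStarAlgAut_apply, Matrix.trace_mul_cycle, hUU, one_mul, Matrix.trace_diagonal]
  simp

lemma eig_det {m : ℕ} (H : Matrix (Fin m) (Fin m) ℝ) (hH : H.IsHermitian) :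
    H.det = ∏ i, hH.eigenvalues i := by
  rw [hH.det_eq_prod_eigenvalues]
  simp

lemma eig_det_one_sub {m : ℕ} (H : Matrix (Fin m) (Fin m) ℝ) (hH : H.IsHermitian) :
    (1 - H).det = ∏ i, (1 - hH.eigenvalues i) := by
  set U : Matrix (Fin m) (Fin m) ℝ := (hH.eigenvectorUnitary : Matrix (Fin m) (Fin m) ℝ) with hU
  have hUU : U * star U = 1 := (Matrix.mem_unitaryGroup_iff).mp (hH.eigenvectorUnitary).2
  have h1H : (1 : Matrix (Fin m) (Fin m) ℝ) - H
      = U * ((1 : Matrix (Fin m) (Fin m) ℝ)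
          - Matrix.diagonal (RCLike.ofReal ∘ hH.eigenvalues)) * star U := by
    rw [Matrix.mul_sub, Matrix.sub_mul, mul_one, hUU, hU, ← Unitary.conjStarAlgAut_apply (S := ℝ) hH.eigenvectorUnitary, ← hH.spectral_theorem]
  rw [h1H, Matrix.det_mul, Matrix.det_mul]
  have hdetU : U.det * (star U).det = 1 := by
    rw [← Matrix.det_mul, hUU, Matrix.det_one]
  have hD : ((1 : Matrix (Fin m) (Fin m) ℝ)
      - Matrix.diagonal (RCLike.ofReal ∘ hH.eigenvalues)).det
      = ∏ i, (1 - hH.eigenvalues i) := by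
    rw [← Matrix.diagonal_one, Matrix.diagonal_sub, Matrix.det_diagonal]
    simp
  calc U.det * ((1 : Matrix (Fin m) (Fin m) ℝ)
        - Matrix.diagonal (RCLike.ofReal ∘ hH.eigenvalues)).det * (star U).det
      = ((1 : Matrix (Fin m) (Fin m) ℝ)
        - Matrix.diagonal (RCLike.ofReal ∘ hH.eigenvalues)).det * (U.det * (star U).det) := by
        ring
    _ = ∏ i, (1 - hH.eigenvalues i) := by rw [hdetU, hD, mul_one]

open scoped Matrix.Norms.L2Operator

lemma diag_norm_le (n : ℕ) [Nonempty (Fin n)] (v : Fin n → ℝ) (c : ℝ) (hc : 0 ≤ c)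
    (h : ∀ i, |v i| ≤ c) : ‖Matrix.diagonal v‖ ≤ c := by
  rw [Matrix.cstar_norm_def]
  apply ContinuousLinearMap.opNorm_le_bound _ hc
  intro x
  have h1 : ∀ i, (Matrix.toEuclideanCLM (𝕜 := ℝ) (Matrix.diagonal v) x) i = v i * x i := by
    intro i
    have h2 := congrFun (Matrix.ofLp_toEuclideanCLM (𝕜 := ℝ) (Matrix.diagonal v) x) i
    simpa [Matrix.mulVec_diagonal] using h2
  rw [EuclideanSpace.norm_eq, EuclideanSpace.norm_eq]
  rw [← Real.sqrt_sq hc, ← Real.sqrt_mul (by positivity)]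
  apply Real.sqrt_le_sqrt
  rw [Finset.mul_sum]
  apply Finset.sum_le_sum
  intro i _
  rw [h1]
  obtain ⟨ha, hb⟩ := abs_le.mp (h i)
  have h3 : (v i)^2 ≤ c^2 := sq_le_sq' ha hb
  simp only [norm_mul, Real.norm_eq_abs, mul_pow]
  calc |v i|^2 * |x i|^2 = (v i)^2 * (x i)^2 := by rw [sq_abs, sq_abs]
    _ ≤ c^2 * (x i)^2 := by nlinarith [sq_nonneg (x i)]
    _ = c^2 * |x i|^2 := by rw [sq_abs]

lemma aux_norm (m : ℕ) (hm : 3 ≤ m) (H : Matrix (Fin m) (Fin m) ℝ) (hH : H.IsHermitian)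
    (c η : ℝ) (hη : 0 ≤ η) (h : ∀ i, |hH.eigenvalues i - c| ≤ η) :
    ‖Matrix.toEuclideanCLM (𝕜 := ℝ) (H - c • (1 : Matrix (Fin m) (Fin m) ℝ))‖ ≤ η := by
  haveI : Nonempty (Fin m) := ⟨⟨0, by omega⟩⟩
  rw [← Matrix.cstar_norm_def]
  set U : Matrix (Fin m) (Fin m) ℝ := (hH.eigenvectorUnitary : Matrix (Fin m) (Fin m) ℝ) with hU
  have hUU : U * star U = 1 := (Matrix.mem_unitaryGroup_iff).mp (hH.eigenvectorUnitary).2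
  have key : H - c • (1 : Matrix (Fin m) (Fin m) ℝ)
      = U * (Matrix.diagonal (fun i => hH.eigenvalues i - c)) * star U := by
    have hd : (Matrix.diagonal (fun i => hH.eigenvalues i - c))
        = Matrix.diagonal (RCLike.ofReal ∘ hH.eigenvalues) - c • (1 : Matrix (Fin m) (Fin m) ℝ) := by
      rw [Matrix.smul_one_eq_diagonal, ← Matrix.diagonal_sub]
      norm_num [Function.comp]
    rw [hd, Matrix.mul_sub, Matrix.sub_mul]
    rw [← Unitary.conjStarAlgAut_apply (S := ℝ) hH.eigenvectorUnitary, ← hH.spectral_theorem]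
    congr 1
    rw [Matrix.mul_smul, Matrix.smul_mul, mul_one, hUU]
  rw [key]
  calc ‖U * Matrix.diagonal (fun i => hH.eigenvalues i - c) * star U‖
      ≤ ‖U * Matrix.diagonal (fun i => hH.eigenvalues i - c)‖ * ‖star U‖ := norm_mul_le _ _
    _ ≤ ‖U‖ * ‖Matrix.diagonal (fun i => hH.eigenvalues i - c)‖ * ‖star U‖ := by
        apply mul_le_mul_of_nonneg_right (norm_mul_le _ _) (norm_nonneg _)
    _ ≤ η := by
        have h1 : ‖U‖ = 1 := CStarRing.norm_coe_unitary hH.eigenvectorUnitary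
        have h2 : ‖star U‖ = 1 := by
          rw [← Unitary.coe_star]
          exact CStarRing.norm_coe_unitary (star hH.eigenvectorUnitary)
        rw [h1, h2, mul_one, one_mul]
        exact diag_norm_le m _ η hη h


/-- **Stability of the BCG determinant inequality.** For `m ≥ 3` and every
`η > 0` there is `ε > 0` such that every positive definite symmetric real
`m × m` matrix `H` with `tr H ≤ 1` and
`(det H)^(1/2) / det(I - H) ≥ m^(m/2)/(m-1)^m - ε` satisfies
`‖H - (1/m) I‖ ≤ η` in the operator norm. -/
theorem bcg_det_stability (m : ℕ) (hm : 3 ≤ m) :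
    ∀ η > (0 : ℝ), ∃ ε > (0 : ℝ),
      ∀ H : Matrix (Fin m) (Fin m) ℝ, H.PosDef → H.trace ≤ 1 →
        (m : ℝ) ^ ((m : ℝ) / 2) / ((m : ℝ) - 1) ^ m - ε ≤
            Real.sqrt H.det / (1 - H).det →
        ‖Matrix.toEuclideanCLM (𝕜 := ℝ)
            (H - ((m : ℝ)⁻¹) • (1 : Matrix (Fin m) (Fin m) ℝ))‖ ≤ η := by
  intro η hη
  have hmR : (3:ℝ) ≤ (m:ℝ) := by exact_mod_cast hm
  have hm0 : (0:ℝ) < (m:ℝ) := by linarith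
  have hm1 : (0:ℝ) < (m:ℝ) - 1 := by linarith
  set c : ℝ := (m:ℝ)⁻¹ with hc
  set M : ℝ := (m:ℝ) ^ ((m:ℝ)/2) / ((m:ℝ)-1)^m with hM
  set M2 : ℝ := (m:ℝ)^m / ((m:ℝ)-1)^(m*2) with hM2
  have hMpos : 0 < M := by
    rw [hM]
    exact div_pos (Real.rpow_pos_of_pos hm0 _) (pow_pos hm1 m)
  have hM2pos : 0 < M2 := by
    rw [hM2]
    exact div_pos (pow_pos hm0 m) (pow_pos hm1 (m*2))
  have hMsq : M^2 = M2 := by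
    rw [hM, hM2, div_pow]
    congr 1
    · rw [← Real.rpow_natCast ((m:ℝ) ^ ((m:ℝ)/2)) 2, ← Real.rpow_mul (le_of_lt hm0)]
      rw [show ((m:ℝ)/2) * ((2:ℕ):ℝ) = ((m:ℕ):ℝ) by push_cast; ring, Real.rpow_natCast]
    · rw [← pow_mul]
  have hMsqrt : Real.sqrt M2 = M := by rw [← hMsq, Real.sqrt_sq (le_of_lt hMpos)]
  set UB : ℝ := (3/10:ℝ)^(m-3) / (((m:ℝ)-1)^(m-1) * (7/10)) with hUBdef
  have hUB0 : 0 ≤ UB := by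
    rw [hUBdef]
    exact le_of_lt (div_pos (pow_pos (by norm_num) _) (mul_pos (pow_pos hm1 _) (by norm_num)))
  have hUBlt : UB < M2 := UB_lt_M2 m hm
  set εb : ℝ := M - Real.sqrt UB with hεb
  have hεbpos : 0 < εb := by
    have h1 := Real.sqrt_lt_sqrt hUB0 hUBlt
    rw [hMsqrt] at h1
    rw [hεb]
    linarith
  set T : Set (Fin m → ℝ) := Kset m ∩ {l | ∃ i, η ≤ |l i - c|} with hT
  have hTcl : IsClosed {l : Fin m → ℝ | ∃ i, η ≤ |l i - c|} := by
    have he : {l : Fin m → ℝ | ∃ i, η ≤ |l i - c|} = ⋃ i, {l : Fin m → ℝ | η ≤ |l i - c|} := by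
      ext l
      simp
    rw [he]
    exact isClosed_iUnion_of_finite
      (fun i => isClosed_le continuous_const (((continuous_apply i).sub continuous_const).abs))
  have hTcpt : IsCompact T := (Kset_compact m).inter_right hTcl
  set S : Set ℝ := insert 0 (Gfn m '' T) with hS
  have hScpt : IsCompact S :=
    (hTcpt.image_of_continuousOn ((Gfn_contOn m).mono Set.inter_subset_left)).insert 0
  set V : ℝ := sSup S with hV
  have hVmem : V ∈ S := hScpt.sSup_mem (Set.insert_nonempty _ _)
  have hVub : ∀ x ∈ S, x ≤ V := fun x hx => le_csSup hScpt.bddAbove hx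
  have hV0 : 0 ≤ V := hVub 0 (Set.mem_insert _ _)
  have hVlt : V < M2 := by
    rcases Set.mem_insert_iff.mp hVmem with h | h
    · rw [h]; exact hM2pos
    · obtain ⟨l, hlT, hle⟩ := h
      rw [← hle]
      apply core_lt m hm l hlT.1
      intro hcenter
      obtain ⟨i, hi⟩ := hlT.2
      rw [hcenter] at hi
      simp [hc] at hi
      linarith
  set ε1 : ℝ := M - Real.sqrt V with hε1
  have hε1pos : 0 < ε1 := by
    have h1 := Real.sqrt_lt_sqrt hV0 hVlt
    rw [hMsqrt] at h1
    rw [hε1]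
    linarith
  refine ⟨min ε1 εb / 2, by positivity, ?_⟩
  intro H hpd htr hhyp
  have hH : H.IsHermitian := hpd.1
  set eig : Fin m → ℝ := hH.eigenvalues with heig
  have heigpos : ∀ i, 0 < eig i := fun i => hpd.eigenvalues_pos i
  have hsum : ∑ i, eig i ≤ 1 := by
    rw [heig, ← eig_trace H hH]
    exact htr
  have heiglt1 : ∀ i, eig i < 1 := by
    intro i
    have h1 : eig i + ∑ k ∈ Finset.univ.erase i, eig k = ∑ k, eig k :=
      Finset.add_sum_erase _ _ (Finset.mem_univ i)
    have hne : (Finset.univ.erase i).Nonempty := by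
      rw [← Finset.card_pos, Finset.card_erase_of_mem (Finset.mem_univ i), Finset.card_univ,
        Fintype.card_fin]
      omega
    have h2 : 0 < ∑ k ∈ Finset.univ.erase i, eig k :=
      Finset.sum_pos (fun k _ => heigpos k) hne
    linarith
  have hdet1pos : 0 < (1 - H).det := by
    rw [eig_det_one_sub H hH]
    exact Finset.prod_pos (fun i _ => by linarith [heiglt1 i])
  have hdet0 : 0 ≤ H.det := by
    rw [eig_det H hH]
    exact le_of_lt (Finset.prod_pos fun i _ => heigpos i)
  set F : ℝ := Real.sqrt H.det / (1 - H).det with hF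
  have hF0 : 0 ≤ F := div_nonneg (Real.sqrt_nonneg _) (le_of_lt hdet1pos)
  have hFsq : F^2 = ∏ i, gfun (eig i) := by
    rw [gfun_prod_eq, hF, div_pow, Real.sq_sqrt hdet0, eig_det H hH, eig_det_one_sub H hH]
  by_contra hcon
  have hdev : ∃ i, η < |eig i - c| := by
    by_contra h2
    push_neg at h2
    exact hcon (aux_norm m hm H hH c η (le_of_lt hη) h2)
  by_cases hbd : ∀ i, eig i ≤ 7/10
  · -- interior case
    have hmemT : eig ∈ T := by
      refine ⟨⟨fun i => ⟨(heigpos i).le, hbd i⟩, hsum⟩, ?_⟩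
      obtain ⟨i, hi⟩ := hdev
      exact ⟨i, hi.le⟩
    have hGle : Gfn m eig ≤ V :=
      hVub _ (Set.mem_insert_of_mem _ (Set.mem_image_of_mem _ hmemT))
    have hGfneq : Gfn m eig = ∏ i, gfun (eig i) := rfl
    have hFle : F ≤ Real.sqrt V := by
      rw [← Real.sqrt_sq hF0]
      apply Real.sqrt_le_sqrt
      rw [hFsq, ← hGfneq]
      exact hGle
    have h1 : M - min ε1 εb / 2 ≤ M - ε1 := by
      calc M - min ε1 εb / 2 ≤ F := hhyp
        _ ≤ Real.sqrt V := hFle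
        _ = M - ε1 := by rw [hε1]; ring
    have h2 : min ε1 εb ≤ ε1 := min_le_left _ _
    linarith
  · -- boundary case
    push_neg at hbd
    obtain ⟨i₁, hi₁⟩ := hbd
    have hchain := chain_base m hm eig (fun i => (heigpos i).le) hsum i₁ (heigpos i₁)
      (heiglt1 i₁)
    have hphiUB := phi_le_UB m hm (eig i₁) hi₁.le (heiglt1 i₁).le
    rw [← hUBdef] at hphiUB
    have hFsqle : F^2 ≤ UB := by
      rw [hFsq]
      exact le_trans hchain hphiUB
    have hFle : F ≤ Real.sqrt UB := by
      rw [← Real.sqrt_sq hF0]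
      exact Real.sqrt_le_sqrt hFsqle
    have h1 : M - min ε1 εb / 2 ≤ M - εb := by
      calc M - min ε1 εb / 2 ≤ F := hhyp
        _ ≤ Real.sqrt UB := hFle
        _ = M - εb := by rw [hεb]; ring
    have h2 : min ε1 εb ≤ εb := min_le_right _ _
    linarith
end

section
/- Let $f : \mathbb{R}^m \to \mathbb{R}$ be defined on positive definite symmetric matrices via eigenvalues by $f(\lambda_1,\dots,\lambda_m) = \frac{\prod_i \lambda_i^{1/2}}{\prod_i (1-\lambda_i)}$ on the domain $\{\lambda \in (0,1)^m : \sum_i \lambda_i \leq 1\}$ with $m \geq 3$. Then $f$ attains its maximum only at the point $(\frac{1}{m},\dots,\frac{1}{m})$, and $f$ has no local maximum on the boundary face $\{\sum_i \lambda_i = 1\}$ other than this point. -/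
open Finset

/-- The eigenvalue functional `f(λ) = (∏ᵢ λᵢ^(1/2)) / (∏ᵢ (1 - λᵢ))`. -/
noncomputable def eigenFunctional (m : ℕ) (l : Fin m → ℝ) : ℝ :=
  (∏ i, Real.sqrt (l i)) / ∏ i, (1 - l i)

/-- The domain `{λ ∈ (0,1)^m : ∑ᵢ λᵢ ≤ 1}`. -/
def eigenDomain (m : ℕ) : Set (Fin m → ℝ) :=
  {l | (∀ i, l i ∈ Set.Ioo (0 : ℝ) 1) ∧ ∑ i, l i ≤ 1}

namespace BCG

lemma nat_key {m : ℕ} (hm : 3 ≤ m) : 64*(m-1)^4 < 49*4^(m-3)*m^m := by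
  by_cases h5 : 5 ≤ m
  · have h1 : (m-1)^4 < m^4 := Nat.pow_lt_pow_left (by omega) (by norm_num)
    have h2 : m^5 ≤ m^m := Nat.pow_le_pow_right (by omega) (by omega)
    have h3 : 4 ≤ 4^(m-3) := by
      calc 4 = 4^1 := rfl
        _ ≤ 4^(m-3) := Nat.pow_le_pow_right (by norm_num) (by omega)
    have h4 : m^4*5 ≤ m^5 := by
      have : m^5 = m^4*m := by ring
      rw [this]
      exact Nat.mul_le_mul_left _ (by omega)
    calc 64*(m-1)^4 < 64*m^4 := by omega
      _ ≤ 49*(m^4*5) := by omega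
      _ ≤ 49*m^5 := Nat.mul_le_mul_left _ h4
      _ ≤ 49*m^m := Nat.mul_le_mul_left _ h2
      _ = 49*1*m^m := by ring
      _ ≤ 49*4^(m-3)*m^m := Nat.mul_le_mul_right _ (Nat.mul_le_mul_left _ (by omega))
  · have : m = 3 ∨ m = 4 := by omega
    rcases this with rfl | rfl <;> norm_num

lemma exists_third (hm : 3 ≤ m) (i j : Fin m) : ∃ k, k ≠ i ∧ k ≠ j := by
  by_contra h
  push_neg at h
  have hsub : (Finset.univ : Finset (Fin m)) ⊆ {i, j} := by
    intro k _
    rcases Classical.em (k = i) with hk | hk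
    · simp [hk]
    · simp [h k hk]
  have := Finset.card_le_card hsub
  simp [Finset.card_univ] at this
  have h2 : ({i, j} : Finset (Fin m)).card ≤ 2 := Finset.card_insert_le _ _ |>.trans (by simp)
  omega

lemma pair_rel {l : Fin m → ℝ} (hl : ∀ i, l i ∈ Set.Ioo (0:ℝ) 1)
    (hs : ∑ i, l i = 1)
    (hmax : IsLocalMaxOn (eigenFunctional m) (eigenDomain m) l)
    {i j : Fin m} (hij : i ≠ j) :
    l i = l j ∨ (1 - l i) * (1 - l j) = 2 * (l i * l j) := by
  classical
  set a := l i with ha_def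
  set b := l j with hb_def
  have ha := hl i
  have hb := hl j
  set γ : ℝ → (Fin m → ℝ) :=
    fun t k => l k + (if k = i then t else 0) - (if k = j then t else 0) with hγ
  have hγ0 : γ 0 = l := by funext k; simp [hγ]
  have hγi : ∀ t, γ t i = a + t := by intro t; simp [hγ, hij, ha_def]
  have hγj : ∀ t, γ t j = b - t := by intro t; simp [hγ, Ne.symm hij, hb_def]
  have hγk : ∀ t k, k ≠ i → k ≠ j → γ t k = l k := by intro t k h1 h2; simp [hγ, h1, h2]
  have hγsum : ∀ t, ∑ k, γ t k = 1 := by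
    intro t
    simp only [hγ]
    rw [Finset.sum_sub_distrib, Finset.sum_add_distrib]
    rw [Finset.sum_ite_eq' Finset.univ i (fun _ => t), Finset.sum_ite_eq' Finset.univ j (fun _ => t)]
    simp [hs]
  set s : Finset (Fin m) := (Finset.univ.erase i).erase j with hserase
  have hjmem : j ∈ Finset.univ.erase i := Finset.mem_erase.2 ⟨Ne.symm hij, Finset.mem_univ j⟩
  set A : ℝ := ∏ k ∈ s, Real.sqrt (l k) with hA
  set B : ℝ := ∏ k ∈ s, (1 - l k) with hB
  have hApos : 0 < A := Finset.prod_pos fun k _ => Real.sqrt_pos.2 (hl k).1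
  have hBpos : 0 < B := Finset.prod_pos fun k _ => by linarith [(hl k).2]
  have hrepr : ∀ t, eigenFunctional m (γ t) =
      (Real.sqrt (a + t) * (Real.sqrt (b - t) * A)) /
        ((1 - (a + t)) * ((1 - (b - t)) * B)) := by
    intro t
    have hnum : ∏ k, Real.sqrt (γ t k) =
        Real.sqrt (a + t) * (Real.sqrt (b - t) * A) := by
      rw [← Finset.mul_prod_erase Finset.univ _ (Finset.mem_univ i),
        ← Finset.mul_prod_erase _ _ hjmem, hγi, hγj]
      congr 1
      congr 1
      apply Finset.prod_congr rfl
      intro k hk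
      rw [hγk t k (Finset.mem_erase.1 (Finset.mem_erase.1 hk).2).1 (Finset.mem_erase.1 hk).1]
    have hden : ∏ k, (1 - γ t k) =
        (1 - (a + t)) * ((1 - (b - t)) * B) := by
      rw [← Finset.mul_prod_erase Finset.univ _ (Finset.mem_univ i),
        ← Finset.mul_prod_erase _ _ hjmem, hγi, hγj]
      congr 1
      congr 1
      apply Finset.prod_congr rfl
      intro k hk
      rw [hγk t k (Finset.mem_erase.1 (Finset.mem_erase.1 hk).2).1 (Finset.mem_erase.1 hk).1]
    rw [eigenFunctional, hnum, hden]
  set h : ℝ → ℝ := fun t =>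
    (Real.sqrt (a + t) * (Real.sqrt (b - t) * A)) /
      ((1 - (a + t)) * ((1 - (b - t)) * B)) with hh_def
  have hlocmax : IsLocalMax h 0 := by
    rcases mem_nhdsWithin.1 hmax with ⟨U, hUopen, hlU, hUsub⟩
    have hγcont : Continuous γ := by
      apply continuous_pi
      intro k
      simp only [hγ]
      split_ifs <;> fun_prop
    have hev1 : ∀ᶠ t in nhds (0:ℝ), γ t ∈ U := by
      have : Filter.Tendsto γ (nhds 0) (nhds l) := by
        simpa [hγ0] using hγcont.tendsto 0
      exact this.eventually (hUopen.eventually_mem hlU)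
    have hev2 : ∀ᶠ t in nhds (0:ℝ), t ∈ Set.Ioo (-(min a (1-b))) (min (1-a) b) := by
      apply Ioo_mem_nhds
      · rw [neg_lt, neg_zero]
        exact lt_min ha.1 (by linarith [hb.2])
      · exact lt_min (by linarith [ha.2]) hb.1
    filter_upwards [hev1, hev2] with t htU ht
    have h1 : 0 < a + t := by linarith [ht.1, min_le_left a (1-b)]
    have h2 : a + t < 1 := by linarith [ht.2, min_le_left (1-a) b]
    have h3 : 0 < b - t := by linarith [ht.2, min_le_right (1-a) b]
    have h4 : b - t < 1 := by linarith [ht.1, min_le_right a (1-b)]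
    have htdom : γ t ∈ eigenDomain m := by
      constructor
      · intro k
        rcases Classical.em (k = i) with rfl | hki
        · rw [hγi]; exact ⟨h1, h2⟩
        · rcases Classical.em (k = j) with rfl | hkj
          · rw [hγj]; exact ⟨h3, h4⟩
          · rw [hγk t k hki hkj]; exact hl k
      · rw [hγsum]
    have hle : eigenFunctional m (γ t) ≤ eigenFunctional m l := hUsub ⟨htU, htdom⟩
    have e0 : h 0 = eigenFunctional m l := by
      rw [← hγ0]; exact (hrepr 0).symm
    rw [e0]
    exact le_of_eq_of_le (hrepr t).symm hle
  -- derivative of h at 0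
  have hsa : Real.sqrt a ≠ 0 := ne_of_gt (Real.sqrt_pos.2 ha.1)
  have hsb : Real.sqrt b ≠ 0 := ne_of_gt (Real.sqrt_pos.2 hb.1)
  have hd1 : HasDerivAt (fun t : ℝ => a + t) 1 0 := by
    simpa using (hasDerivAt_id (0:ℝ)).const_add a
  have hd2 : HasDerivAt (fun t : ℝ => b - t) (-1) 0 := by
    simpa using (hasDerivAt_id (0:ℝ)).const_sub b
  have hs1 : HasDerivAt (fun t : ℝ => Real.sqrt (a + t)) (1 / (2 * Real.sqrt a)) 0 := by
    have := (Real.hasDerivAt_sqrt (x := a + 0) (by simpa using ne_of_gt ha.1)).comp 0 hd1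
    simpa [Function.comp_def] using this
  have hs2 : HasDerivAt (fun t : ℝ => Real.sqrt (b - t)) (-(1 / (2 * Real.sqrt b))) 0 := by
    have := (Real.hasDerivAt_sqrt (x := b - 0) (by simpa using ne_of_gt hb.1)).comp 0 hd2
    simpa [Function.comp_def] using this
  have hnum : HasDerivAt (fun t : ℝ => Real.sqrt (a + t) * (Real.sqrt (b - t) * A))
      (1 / (2 * Real.sqrt a) * (Real.sqrt (b - 0) * A)
        + Real.sqrt (a + 0) * (-(1 / (2 * Real.sqrt b)) * A)) 0 :=
    hs1.mul (hs2.mul_const A)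
  have hv1 : HasDerivAt (fun t : ℝ => 1 - (a + t)) (-1) 0 := by
    simpa using ((hasDerivAt_id (0:ℝ)).const_add a).const_sub 1
  have hv2 : HasDerivAt (fun t : ℝ => 1 - (b - t)) 1 0 := by
    simpa using ((hasDerivAt_id (0:ℝ)).const_sub b).const_sub 1
  have hden : HasDerivAt (fun t : ℝ => (1 - (a + t)) * ((1 - (b - t)) * B))
      ((-1) * ((1 - (b - 0)) * B) + (1 - (a + 0)) * (1 * B)) 0 :=
    hv1.mul (hv2.mul_const B)
  have hden0 : (1 - (a + 0)) * ((1 - (b - 0)) * B) ≠ 0 := by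
    have : (0:ℝ) < (1 - (a + 0)) * ((1 - (b - 0)) * B) := by
      apply mul_pos (by linarith [ha.2]) (mul_pos (by linarith [hb.2]) hBpos)
    exact ne_of_gt this
  have hder : HasDerivAt h
      (((1 / (2 * Real.sqrt a) * (Real.sqrt (b - 0) * A)
        + Real.sqrt (a + 0) * (-(1 / (2 * Real.sqrt b)) * A)) *
          ((1 - (a + 0)) * ((1 - (b - 0)) * B)) -
        (Real.sqrt (a + 0) * (Real.sqrt (b - 0) * A)) *
          ((-1) * ((1 - (b - 0)) * B) + (1 - (a + 0)) * (1 * B))) /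
        ((1 - (a + 0)) * ((1 - (b - 0)) * B)) ^ 2) 0 :=
    hnum.div hden hden0
  have hzero := hlocmax.deriv_eq_zero
  rw [hder.deriv] at hzero
  rw [div_eq_zero_iff] at hzero
  rcases hzero with hzero | hzero
  swap
  · exact absurd hzero (pow_ne_zero 2 hden0)
  -- algebra
  have ha2 : Real.sqrt a ^ 2 = a := Real.sq_sqrt ha.1.le
  have hb2 : Real.sqrt b ^ 2 = b := Real.sq_sqrt hb.1.le
  set sa := Real.sqrt a
  set sb := Real.sqrt b
  simp only [add_zero, sub_zero] at hzero
  have key : (b - a) * ((1 - a) * (1 - b) - 2 * (a * b)) = 0 := by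
    have hAB : A * B ≠ 0 := ne_of_gt (mul_pos hApos hBpos)
    rw [show Real.sqrt a = sa from rfl, show Real.sqrt b = sb from rfl] at hzero
    rw [← ha2, ← hb2] at hzero ⊢
    field_simp at hzero
    have h2AB : (2:ℝ) * A * B ≠ 0 := by positivity
    have h2 : (2 * A * B) * ((sb ^ 2 - sa ^ 2) * ((1 - sa ^ 2) * (1 - sb ^ 2) - 2 * (sa ^ 2 * sb ^ 2))) = 0 := by
      linear_combination 2 * hzero
    exact (mul_eq_zero.1 h2).resolve_left h2AB
  rcases mul_eq_zero.1 key with hk | hk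
  · left; linarith
  · right; linarith

lemma face_eq_uniform (hm : 3 ≤ m) {l : Fin m → ℝ} (hl : ∀ i, l i ∈ Set.Ioo (0:ℝ) 1)
    (hs : ∑ i, l i = 1)
    (hmax : IsLocalMaxOn (eigenFunctional m) (eigenDomain m) l) :
    l = fun _ => (m : ℝ)⁻¹ := by
  classical
  have hall : ∀ i j : Fin m, l i = l j := by
    intro i j
    by_contra hne
    have hij : i ≠ j := by rintro rfl; exact hne rfl
    have hrel := (pair_rel hl hs hmax hij).resolve_left hne
    have hrel' : 1 - l i - l j = l i * l j := by linear_combination hrel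
    obtain ⟨k, hki, hkj⟩ := exists_third hm i j
    have hsum3 : l i + l j + l k ≤ 1 := by
      have hsub : ({i, j, k} : Finset (Fin m)) ⊆ Finset.univ := Finset.subset_univ _
      have hsum : ∑ x ∈ ({i, j, k} : Finset (Fin m)), l x = l i + l j + l k := by
        rw [Finset.sum_insert (by simp [hij, Ne.symm hki]), Finset.sum_insert (by simp [Ne.symm hkj]),
          Finset.sum_singleton]
        ring
      calc l i + l j + l k = ∑ x ∈ ({i, j, k} : Finset (Fin m)), l x := hsum.symm
        _ ≤ ∑ x, l x := Finset.sum_le_sum_of_subset_of_nonneg hsub fun x _ _ => (hl x).1.le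
        _ = 1 := hs
    have hk_le : l k ≤ l i * l j := by linarith
    have hk_lt_i : l k < l i := by nlinarith [(hl i).1, (hl j).2]
    have hk_lt_j : l k < l j := by nlinarith [(hl j).1, (hl i).2]
    have hrik := (pair_rel hl hs hmax hki.symm).resolve_left (by intro h; exact absurd h.symm (ne_of_lt hk_lt_i))
    have hrjk := (pair_rel hl hs hmax hkj.symm).resolve_left (by intro h; exact absurd h.symm (ne_of_lt hk_lt_j))
    -- (1 - l i)(1 - l k) = 2 l i l k and (1 - l j)(1 - l k) = 2 l j l k
    have hfin : (l i - l j) * (1 + l k) = 0 := by linear_combination hrjk - hrik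
    have : l i = l j := by
      rcases mul_eq_zero.1 hfin with h | h
      · linarith
      · nlinarith [(hl k).1]
    exact hne this
  have i0 : Fin m := ⟨0, by omega⟩
  funext i
  have hconst : ∀ j, l j = l i := fun j => hall j i
  have hsum : ∑ j, l j = m * l i := by
    rw [Finset.sum_congr rfl fun j _ => hconst j]
    simp [Finset.card_univ, mul_comm]
  have hm0 : (m:ℝ) ≠ 0 := Nat.cast_ne_zero.2 (by omega)
  have h1 : (m:ℝ) * l i = 1 := hsum.symm.trans hs
  field_simp
  linear_combination h1

/-- scaling up to the face strictly increases the functional -/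
lemma scale_lt (hm : 3 ≤ m) {l : Fin m → ℝ} (hl : ∀ i, l i ∈ Set.Ioo (0:ℝ) 1)
    (hslt : ∑ i, l i < 1) :
    (∀ i, (fun i => l i / ∑ i, l i) i ∈ Set.Ioo (0:ℝ) 1) ∧
      (∑ i, (fun i => l i / ∑ i, l i) i) = 1 ∧
      eigenFunctional m l < eigenFunctional m (fun i => l i / ∑ i, l i) := by
  classical
  have hne : (Finset.univ : Finset (Fin m)).Nonempty := by
    refine ⟨⟨0, by omega⟩, Finset.mem_univ _⟩
  set S := ∑ i, l i with hS
  have hSpos : 0 < S := Finset.sum_pos (fun i _ => (hl i).1) hne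
  have hlt : ∀ i, l i < S := by
    intro i
    obtain ⟨k, hki, _⟩ := exists_third hm i i
    have : l i + ∑ j ∈ Finset.univ.erase i, l j = S := by
      rw [hS, Finset.add_sum_erase _ _ (Finset.mem_univ i)]
    have hpos : 0 < ∑ j ∈ Finset.univ.erase i, l j :=
      Finset.sum_pos (fun j _ => (hl j).1) ⟨k, Finset.mem_erase.2 ⟨hki, Finset.mem_univ k⟩⟩
    linarith
  have hmem : ∀ i, l i / S ∈ Set.Ioo (0:ℝ) 1 := by
    intro i
    constructor
    · exact div_pos (hl i).1 hSpos
    · rw [div_lt_one hSpos]; exact hlt i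
  refine ⟨hmem, ?_, ?_⟩
  · rw [← Finset.sum_div, div_self (ne_of_gt hSpos)]
  · have hgt : ∀ i, l i < l i / S := by
      intro i
      rw [lt_div_iff₀ hSpos]
      nlinarith [(hl i).1]
    rw [eigenFunctional, eigenFunctional, ← Finset.prod_div_distrib, ← Finset.prod_div_distrib]
    apply Finset.prod_lt_prod_of_nonempty
    · intro i _
      apply div_pos (Real.sqrt_pos.2 (hl i).1)
      linarith [(hl i).2]
    · intro i _
      have h1 : Real.sqrt (l i) < Real.sqrt (l i / S) := Real.sqrt_lt_sqrt (hl i).1.le (hgt i)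
      have h2 : (0:ℝ) < 1 - l i / S := by linarith [(hmem i).2]
      have h3 : 1 - l i / S < 1 - l i := by linarith [hgt i]
      exact div_lt_div₀ h1 h3.le (Real.sqrt_nonneg _) h2
    · exact hne

/-- Weierstrass product inequality -/
lemma one_sub_sum_le_prod (s : Finset (Fin m)) (x : Fin m → ℝ)
    (h0 : ∀ j ∈ s, 0 ≤ x j) (h1 : ∀ j ∈ s, x j ≤ 1) :
    1 - ∑ j ∈ s, x j ≤ ∏ j ∈ s, (1 - x j) := by
  classical
  induction s using Finset.induction_on with
  | empty => simp
  | insert _ _ hnotmem ih =>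
    rename_i c s'
    rw [Finset.sum_insert hnotmem, Finset.prod_insert hnotmem]
    have hc0 := h0 c (Finset.mem_insert_self c s')
    have hc1 := h1 c (Finset.mem_insert_self c s')
    have ih' := ih (fun j hj => h0 j (Finset.mem_insert_of_mem hj))
      (fun j hj => h1 j (Finset.mem_insert_of_mem hj))
    have hsum0 : 0 ≤ ∑ j ∈ s', x j := Finset.sum_nonneg fun j hj => h0 j (Finset.mem_insert_of_mem hj)
    nlinarith [ih', hsum0]

/-- AM-GM over a finset, product form -/
lemma prod_le_pow (s : Finset (Fin m)) (x : Fin m → ℝ) (hx : ∀ j ∈ s, 0 ≤ x j)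
    (hcard : s.card ≠ 0) :
    ∏ j ∈ s, x j ≤ ((∑ j ∈ s, x j) / s.card) ^ s.card := by
  classical
  set n := s.card with hn
  have hnR : (0:ℝ) < n := by positivity
  have hgm := Real.geom_mean_le_arith_mean_weighted s (fun _ => (n:ℝ)⁻¹) x
    (fun i _ => by positivity) (by
      rw [Finset.sum_const, nsmul_eq_mul, ← hn]
      field_simp) hx
  have hprod : ∏ j ∈ s, x j = (∏ j ∈ s, x j ^ ((n:ℝ)⁻¹)) ^ n := by
    rw [← Finset.prod_pow]
    apply Finset.prod_congr rfl
    intro j hj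
    rw [← Real.rpow_natCast (x j ^ ((n:ℝ)⁻¹)) n, ← Real.rpow_mul (hx j hj)]
    simp [inv_mul_cancel₀ (ne_of_gt hnR)]
  rw [hprod]
  apply pow_le_pow_left₀
  · exact Finset.prod_nonneg fun j hj => Real.rpow_nonneg (hx j hj) _
  · calc ∏ j ∈ s, x j ^ ((n:ℝ)⁻¹) ≤ ∑ j ∈ s, (n:ℝ)⁻¹ * x j := hgm
      _ = (∑ j ∈ s, x j) / n := by rw [← Finset.mul_sum]; ring

lemma eigen_pos' {l : Fin m → ℝ} (hl : ∀ i, l i ∈ Set.Ioo (0:ℝ) 1) :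
    0 < eigenFunctional m l :=
  div_pos (Finset.prod_pos fun i _ => Real.sqrt_pos.2 (hl i).1)
    (Finset.prod_pos fun i _ => by linarith [(hl i).2])

lemma corner_lt (hm : 3 ≤ m) {l : Fin m → ℝ} (hl : ∀ i, l i ∈ Set.Ioo (0:ℝ) 1)
    (hs : ∑ i, l i = 1) {i0 : Fin m} (hbig : 1 - (4*((m:ℝ)-1))⁻¹ < l i0) :
    eigenFunctional m l < eigenFunctional m (fun _ => (m:ℝ)⁻¹) := by
  classical
  obtain ⟨k, rfl⟩ : ∃ k, m = k + 3 := ⟨m - 3, by omega⟩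
  have hc : ((k+3:ℕ):ℝ) = (k:ℝ)+3 := by push_cast; ring
  set x := (k:ℝ) with hx
  have hx0 : 0 ≤ x := Nat.cast_nonneg k
  simp only [hc] at hbig ⊢
  have hc2 : (x+3) - 1 = x+2 := by ring
  rw [hc2] at hbig
  set μ := x + 2 with hμ
  set mR := x + 3 with hmR
  have hμpos : (0:ℝ) < μ := by rw [hμ]; linarith
  have hmRpos : (0:ℝ) < mR := by rw [hmR]; linarith
  set β := (4*μ)⁻¹ with hβ
  have hβpos : 0 < β := by positivity
  have hβ8 : β ≤ 1/8 := by
    rw [hβ, show (1/8:ℝ) = (8:ℝ)⁻¹ by norm_num]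
    exact inv_anti₀ (by norm_num) (by rw [hμ]; linarith)
  set δ := 1 - l i0 with hδ
  have hδpos : 0 < δ := by
    have := (hl i0).2
    rw [hδ]; linarith
  have hδβ : δ < β := by rw [hδ]; linarith
  set s : Finset (Fin (k+3)) := Finset.univ.erase i0 with hserase
  have hcards : s.card = k + 2 := by
    rw [hserase, Finset.card_erase_of_mem (Finset.mem_univ _), Finset.card_univ, Fintype.card_fin]
    omega
  have hsum_s : ∑ j ∈ s, l j = δ := by
    have h := Finset.add_sum_erase Finset.univ l (Finset.mem_univ i0)
    rw [hs] at h
    rw [hserase, hδ]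
    linarith
  -- numerator bound
  have hprod_s : ∏ j ∈ s, l j ≤ (δ/μ)^(k+2) := by
    have h := prod_le_pow s l (fun j _ => (hl j).1.le) (by rw [hcards]; omega)
    rw [hsum_s, hcards] at h
    have e : ((k+2:ℕ):ℝ) = μ := by rw [hμ, hx]; push_cast; ring
    rw [e] at h
    exact h
  have hnum : ∏ j, l j ≤ (δ/μ)^(k+2) := by
    rw [← Finset.mul_prod_erase Finset.univ l (Finset.mem_univ i0), ← hserase]
    calc l i0 * ∏ j ∈ s, l j ≤ 1 * ((δ/μ)^(k+2)) :=
          mul_le_mul (hl i0).2.le hprod_s (Finset.prod_nonneg fun j _ => (hl j).1.le) zero_le_one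
      _ = (δ/μ)^(k+2) := one_mul _
  -- denominator bound
  have hden : δ * (7/8) ≤ ∏ j, (1 - l j) := by
    rw [← Finset.mul_prod_erase Finset.univ _ (Finset.mem_univ i0), ← hserase]
    have h78 : (7/8 : ℝ) ≤ ∏ j ∈ s, (1 - l j) := by
      calc (7/8:ℝ) ≤ 1 - δ := by linarith
        _ = 1 - ∑ j ∈ s, l j := by rw [hsum_s]
        _ ≤ ∏ j ∈ s, (1 - l j) :=
            one_sub_sum_le_prod s l (fun j _ => (hl j).1.le) (fun j _ => (hl j).2.le)
    calc δ * (7/8) ≤ δ * ∏ j ∈ s, (1 - l j) := mul_le_mul_of_nonneg_left h78 hδpos.le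
      _ = (1 - l i0) * ∏ j ∈ s, (1 - l j) := by rw [hδ]
  have hdenpos : (0:ℝ) < δ * (7/8) := by positivity
  -- squares
  have hfl2 : (eigenFunctional (k+3) l)^2 = (∏ j, l j) / (∏ j, (1 - l j))^2 := by
    rw [eigenFunctional, div_pow, ← Finset.prod_pow]
    congr 1
    exact Finset.prod_congr rfl fun j _ => Real.sq_sqrt (hl j).1.le
  have huni : eigenFunctional (k+3) (fun _ => mR⁻¹) =
      (Real.sqrt (mR⁻¹))^(k+3) / (1 - mR⁻¹)^(k+3) := by
    rw [eigenFunctional]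
    simp [Finset.prod_const, Finset.card_univ]
  have huni2 : (eigenFunctional (k+3) (fun _ => mR⁻¹))^2 = (mR⁻¹)^(k+3) / ((1 - mR⁻¹)^(k+3))^2 := by
    rw [huni, div_pow]
    congr 1
    rw [← pow_mul, mul_comm (k+3) 2, pow_mul, Real.sq_sqrt (by positivity)]
  -- key real inequality, cast from nat_key
  have hkeyR : 64*μ^4 < 49*4^k*mR^(k+3) := by
    have h := nat_key (m := k+3) (by omega)
    have e1 : k+3-1 = k+2 := by omega
    have e2 : k+3-3 = k := by omega
    rw [e1, e2] at h
    have hcast : ((64*(k+2)^4 : ℕ) : ℝ) < ((49*4^k*(k+3)^(k+3) : ℕ) : ℝ) := by exact_mod_cast h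
    push_cast at hcast
    rw [hμ, hmR]
    convert hcast using 2
  have hμm : 1 - mR⁻¹ = μ/mR := by rw [hμ, hmR]; field_simp; ring
  -- main chain
  have hmain : (δ/μ)^(k+2) / (δ*(7/8))^2 < (mR⁻¹)^(k+3) / ((1 - mR⁻¹)^(k+3))^2 := by
    rw [hμm, div_lt_div_iff₀ (by positivity) (by positivity)]
    have I1 : (δ/μ)^(k+2) * ((μ/mR)^(k+3))^2 = δ^k*δ^2 * μ^(k+4) / mR^(2*k+6) := by
      clear_value β δ μ mR
      have hμk : μ^(k+2) * (μ⁻¹)^(k+2) = 1 := by rw [← mul_pow, mul_inv_cancel₀ hμpos.ne', one_pow]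
      linear_combination (δ^(k+2) * μ^(k+4) * (mR⁻¹)^(2*k+6)) * hμk
    have I2 : (mR⁻¹)^(k+3) * (δ*(7/8))^2 = δ^2*(49/64) / mR^(k+3) := by
      rw [inv_pow, div_eq_mul_inv]
      ring
    rw [I1, I2, div_lt_div_iff₀ (by positivity) (by positivity)]
    have hε : δ*(4*μ) < 1 := by
      rw [hβ] at hδβ
      calc δ*(4*μ) < (4*μ)⁻¹*(4*μ) := mul_lt_mul_of_pos_right hδβ (by positivity)
        _ = 1 := inv_mul_cancel₀ (by positivity)
    have hεpow : δ^k*(4^k*μ^k) ≤ 1 := by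
      have hsplit : (δ*(4*μ))^k = δ^k*(4^k*μ^k) := by rw [mul_pow, mul_pow]
      rw [← hsplit]
      exact pow_le_one₀ (by positivity) hε.le
    rw [← mul_lt_mul_iff_left₀ (show (0:ℝ) < 64*4^k by positivity)]
    have h3 : (64*μ^4)*mR^(k+3) < (49*4^k*mR^(k+3))*mR^(k+3) :=
      mul_lt_mul_of_pos_right hkeyR (by positivity)
    have h4 : δ^2*((64*μ^4)*mR^(k+3)) < δ^2*((49*4^k*mR^(k+3))*mR^(k+3)) :=
      mul_lt_mul_of_pos_left h3 (by positivity)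
    calc δ^k*δ^2*μ^(k+4) * mR^(k+3) * (64*4^k)
        = (δ^k*(4^k*μ^k)) * (δ^2*((64*μ^4)*mR^(k+3))) := by ring
      _ ≤ 1 * (δ^2*((64*μ^4)*mR^(k+3))) := mul_le_mul_of_nonneg_right hεpow (by positivity)
      _ = δ^2*((64*μ^4)*mR^(k+3)) := one_mul _
      _ < δ^2*((49*4^k*mR^(k+3))*mR^(k+3)) := h4
      _ = δ^2*(49/64) * mR^(2*k+6) * (64*4^k) := by ring
  -- conclude
  have hfl2' : (eigenFunctional (k+3) l)^2 < (eigenFunctional (k+3) (fun _ => mR⁻¹))^2 := by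
    rw [hfl2, huni2]
    calc (∏ j, l j) / (∏ j, (1 - l j))^2 ≤ (δ/μ)^(k+2) / (δ*(7/8))^2 :=
          div_le_div₀ (by positivity) hnum (by positivity) (pow_le_pow_left₀ hdenpos.le hden 2)
      _ < (mR⁻¹)^(k+3) / ((1 - mR⁻¹)^(k+3))^2 := hmain
  have huni_pos : 0 < eigenFunctional (k+3) (fun _ => mR⁻¹) := by
    apply eigen_pos'
    intro i
    constructor
    · positivity
    · exact inv_lt_one_of_one_lt₀ (by rw [hmR]; linarith)
  exact lt_of_pow_lt_pow_left₀ 2 huni_pos.le hfl2'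

end BCG

open BCG in
/-- **Eigenvalue reformulation of the BCG inequality.** For `m ≥ 3` the
functional `f` attains its maximum on the domain only at `(1/m, …, 1/m)`, and
has no local maximum on the boundary face `{∑ λᵢ = 1}` other than this point. -/
theorem eigenFunctional_max (m : ℕ) (hm : 3 ≤ m) :
    (∀ l ∈ eigenDomain m,
        eigenFunctional m l ≤ eigenFunctional m (fun _ => (m : ℝ)⁻¹)) ∧
    (∀ l ∈ eigenDomain m,
        eigenFunctional m l = eigenFunctional m (fun _ => (m : ℝ)⁻¹) →
          l = fun _ => (m : ℝ)⁻¹) ∧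
    (∀ l : Fin m → ℝ, (∀ i, l i ∈ Set.Ioo (0 : ℝ) 1) → ∑ i, l i = 1 →
        l ≠ (fun _ => (m : ℝ)⁻¹) →
          ¬ IsLocalMaxOn (eigenFunctional m) (eigenDomain m) l) := by
  classical
  have hmR : (3:ℝ) ≤ (m:ℝ) := by exact_mod_cast hm
  set β : ℝ := (4*((m:ℝ)-1))⁻¹ with hβ
  have hβpos : 0 < β := by rw [hβ]; exact inv_pos.2 (by linarith)
  have hβ8 : β ≤ 1/8 := by
    rw [hβ, show (1/8:ℝ) = (8:ℝ)⁻¹ by norm_num]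
    apply inv_anti₀ (by norm_num) (by linarith)
  set f := eigenFunctional m with hf
  set unif : Fin m → ℝ := fun _ => (m:ℝ)⁻¹ with hunif
  have hmpos : (0:ℝ) < m := by linarith
  have huIoo : ∀ i : Fin m, unif i ∈ Set.Ioo (0:ℝ) 1 := by
    intro i
    constructor
    · rw [hunif]; positivity
    · rw [hunif]; exact inv_lt_one_of_one_lt₀ (by linarith)
  have husum : ∑ i, unif i = 1 := by
    rw [hunif, Finset.sum_const, Finset.card_univ, Fintype.card_fin, nsmul_eq_mul]
    exact mul_inv_cancel₀ (ne_of_gt hmpos)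
  have hudom : unif ∈ eigenDomain m := ⟨huIoo, le_of_eq husum⟩
  have huinv : unif ≤ (fun _ => 1 - β) := by
    intro i
    show (m:ℝ)⁻¹ ≤ 1 - β
    have h3 : (m:ℝ)⁻¹ ≤ 3⁻¹ := inv_anti₀ (by norm_num) hmR
    have : (3:ℝ)⁻¹ ≤ 1 - 1/8 := by norm_num
    linarith
  -- the compact truncated set
  set T : Set (Fin m → ℝ) :=
    (Set.Icc (0 : Fin m → ℝ) (fun _ => 1 - β)) ∩ {x | ∑ i, x i = 1} with hT
  have hsumcont : Continuous fun x : Fin m → ℝ => ∑ i, x i :=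
    continuous_finset_sum _ fun i _ => continuous_apply i
  have hTcomp : IsCompact T :=
    IsCompact.inter_right isCompact_Icc (isClosed_eq hsumcont continuous_const)
  have hTne : T.Nonempty := ⟨unif, ⟨fun i => (huIoo i).1.le, huinv⟩, husum⟩
  have hfc : ContinuousOn f T := by
    apply ContinuousOn.div
    · exact (continuous_finset_prod _ fun i _ =>
        Real.continuous_sqrt.comp (continuous_apply i)).continuousOn
    · exact (continuous_finset_prod _ fun i _ =>
        continuous_const.sub (continuous_apply i)).continuousOn
    · intro x hx
      have : ∀ i, x i ≤ 1 - β := hx.1.2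
      apply ne_of_gt
      exact Finset.prod_pos fun i _ => by linarith [this i, hβpos]
  obtain ⟨w, hwT, hwmax'⟩ := hTcomp.exists_isMaxOn hTne hfc
  have hwmax : ∀ x ∈ T, f x ≤ f w := fun x hx => hwmax' hx
  have hfu_le : f unif ≤ f w := hwmax unif ⟨⟨fun i => (huIoo i).1.le, huinv⟩, husum⟩
  have hfupos : 0 < f unif := eigen_pos' huIoo
  -- every face point is dominated
  have face_le : ∀ x : Fin m → ℝ, (∀ i, x i ∈ Set.Ioo (0:ℝ) 1) → ∑ i, x i = 1 →
      f x ≤ f w := by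
    intro x hx hsx
    by_cases hcap : ∀ i, x i ≤ 1 - β
    · exact hwmax x ⟨⟨fun i => (hx i).1.le, hcap⟩, hsx⟩
    · push_neg at hcap
      obtain ⟨i0, hi0⟩ := hcap
      exact le_trans (corner_lt hm hx hsx hi0).le hfu_le
  have Gmax : ∀ x ∈ eigenDomain m, f x ≤ f w := by
    intro x hx
    rcases eq_or_lt_of_le hx.2 with hsx | hsx
    · exact face_le x hx.1 hsx
    · obtain ⟨h1, h2, h3⟩ := scale_lt hm hx.1 hsx
      exact le_trans h3.le (face_le _ h1 h2)
  -- the maximizer is the uniform point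
  have hwIoo : ∀ i, w i ∈ Set.Ioo (0:ℝ) 1 := by
    intro i
    have hle : w i ≤ 1 - β := hwT.1.2 i
    have hge : 0 ≤ w i := hwT.1.1 i
    constructor
    · rcases lt_or_eq_of_le hge with h | h
      · exact h
      · exfalso
        have hzero : f w = 0 := by
          rw [hf, eigenFunctional]
          rw [Finset.prod_eq_zero (Finset.mem_univ i) (by rw [← h]; exact Real.sqrt_zero)]
          exact zero_div _
        linarith [hfu_le, hfupos, hzero]
    · linarith
  have hwloc : IsLocalMaxOn f (eigenDomain m) w := by
    apply IsMaxOn.localize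
    intro x hx
    exact Gmax x hx
  have hweq : w = unif := face_eq_uniform hm hwIoo hwT.2 hwloc
  have part1 : ∀ l ∈ eigenDomain m, f l ≤ f unif := by
    intro l hl
    rw [← hweq]
    exact Gmax l hl
  refine ⟨part1, ?_, ?_⟩
  · intro l hl heq
    by_cases hsum : ∑ i, l i = 1
    · apply face_eq_uniform hm hl.1 hsum
      apply IsMaxOn.localize
      intro x hx
      calc f x ≤ f unif := part1 x hx
        _ = f l := heq.symm
    · exfalso
      have hlt : ∑ i, l i < 1 := lt_of_le_of_ne hl.2 hsum
      obtain ⟨h1, h2, h3⟩ := scale_lt hm hl.1 hlt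
      have : f (fun i => l i / ∑ i, l i) ≤ f unif := part1 _ ⟨h1, le_of_eq h2⟩
      rw [← heq] at this
      linarith
  · intro l hl hsum hne hmax
    exact hne (face_eq_uniform hm hl hsum hmax)
end

section
/- Let $H$ and $K$ be positive definite symmetric $m \times m$ matrices with $K = I - H$, $\operatorname{tr}(H) \leq 1$, and $m \geq 3$. Suppose $J \geq 0$ satisfies $\det(K) \cdot J \leq \frac{(m-1)^m}{m^{m/2}} \det(H)^{1/2}$. Then $J \leq 1$. -/
set_option maxHeartbeats 1000000

namespace BCGAux

open Finset Matrix

-- Weierstrass product inequality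
lemma weier {ι : Type*} (s : Finset ι) (f : ι → ℝ) (h0 : ∀ i ∈ s, 0 ≤ f i)
    (h1 : ∀ i ∈ s, f i ≤ 1) : 1 - ∑ i ∈ s, f i ≤ ∏ i ∈ s, (1 - f i) := by
  classical
  induction s using Finset.cons_induction with
  | empty => simp
  | cons a s ha ih =>
    rw [Finset.prod_cons, Finset.sum_cons]
    have h0a := h0 a (Finset.mem_cons_self a s)
    have h1a := h1 a (Finset.mem_cons_self a s)
    have ih' := ih (fun i hi => h0 i (Finset.mem_cons_of_mem hi))
      (fun i hi => h1 i (Finset.mem_cons_of_mem hi))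
    have hs : ∑ i ∈ s, f i ≥ 0 := Finset.sum_nonneg (fun i hi => h0 i (Finset.mem_cons_of_mem hi))
    nlinarith [ih']

-- AM-GM
lemma amgm {ι : Type*} (s : Finset ι) (hs : s.Nonempty) (f : ι → ℝ)
    (h0 : ∀ i ∈ s, 0 ≤ f i) :
    ∏ i ∈ s, f i ≤ ((∑ i ∈ s, f i) / s.card) ^ (s.card : ℕ) := by
  have hc : (0:ℝ) < s.card := by exact_mod_cast Finset.card_pos.mpr hs
  have h := Real.geom_mean_le_arith_mean s (fun _ => 1) f (fun i _ => zero_le_one)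
    (by simpa using hc) h0
  simp only [Real.rpow_one, Finset.sum_const, nsmul_eq_mul, mul_one, one_mul] at h
  have hprod : 0 ≤ ∏ i ∈ s, f i := Finset.prod_nonneg h0
  have h2 : ((∏ i ∈ s, f i) ^ ((s.card : ℝ))⁻¹ : ℝ) ^ (s.card : ℕ)
      ≤ ((∑ i ∈ s, f i) / s.card) ^ (s.card : ℕ) := by
    apply pow_le_pow_left₀ (Real.rpow_nonneg hprod _) h
  rw [← Real.rpow_natCast ((∏ i ∈ s, f i) ^ ((s.card:ℝ))⁻¹) s.card, ← Real.rpow_mul hprod,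
    inv_mul_cancel₀ (ne_of_gt hc), Real.rpow_one] at h2
  exact h2

noncomputable def gfun (c : ℝ) : ℝ → ℝ := fun x => 2 * Real.log (1 - x) - Real.log x + c * x

lemma gfun_hasDeriv (c x : ℝ) (hx : 0 < x) (hx1 : x < 1) :
    HasDerivAt (gfun c) (-2 / (1 - x) - 1/x + c) x := by
  have h1 : HasDerivAt (fun y : ℝ => 1 - y) (-1) x := by
    simpa using (hasDerivAt_id x).const_sub 1
  have h2 : HasDerivAt (fun y : ℝ => Real.log (1 - y)) (-1/(1-x)) x := by
    have := (Real.hasDerivAt_log (by linarith : (1:ℝ) - x ≠ 0)).comp x h1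
    simpa [div_eq_mul_inv, mul_comm, Function.comp_def] using this
  have h3 : HasDerivAt (fun y : ℝ => Real.log y) (1/x) x := by
    simpa [one_div] using Real.hasDerivAt_log (ne_of_gt hx)
  have h4 : HasDerivAt (fun y : ℝ => c * y) c x := by
    simpa using (hasDerivAt_id x).const_mul c
  have := ((h2.const_mul 2).sub h3).add h4
  rw [show (-2 / (1 - x) - 1/x + c) = 2 * (-1 / (1 - x)) - 1 / x + c by ring]
  exact this

-- tangent line inequality
lemma tangent (p : ℝ) (hp : 0 < p) (hp3 : p ≤ 1/3) {x : ℝ} (hx : 0 < x) (hx2 : x ≤ 1/2) :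
    gfun (2/(1-p) + 1/p) p ≤ gfun (2/(1-p) + 1/p) x := by
  set c : ℝ := 2/(1-p) + 1/p with hc
  have hcont : ∀ y ∈ Set.Ioo (0:ℝ) 1, ContinuousAt (gfun c) y := by
    intro y hy
    exact (gfun_hasDeriv c y hy.1 hy.2).continuousAt
  rcases le_or_gt x p with hxp | hxp
  · -- antitone on Ioc 0 p
    have hanti : AntitoneOn (gfun c) (Set.Ioc 0 p) := by
      apply antitoneOn_of_deriv_nonpos (convex_Ioc 0 p)
      · apply ContinuousOn.mono (fun y hy => (hcont y hy).continuousWithinAt)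
        intro y hy; exact ⟨hy.1, lt_of_le_of_lt hy.2 (by linarith)⟩
      · intro y hy
        rw [interior_Ioc] at hy
        exact (gfun_hasDeriv c y hy.1 (by linarith [hy.2])).differentiableAt.differentiableWithinAt
      · intro y hy
        rw [interior_Ioc] at hy
        obtain ⟨hy1, hy2⟩ := hy
        rw [(gfun_hasDeriv c y hy1 (by linarith)).deriv]
        have key : 2/(1-p) + 1/p ≤ 2/(1-y) + 1/y := by
          rw [div_add_div _ _ (by linarith : (1:ℝ)-p ≠ 0) (ne_of_gt hp),
            div_add_div _ _ (by linarith : (1:ℝ)-y ≠ 0) (ne_of_gt hy1),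
            div_le_div_iff₀ (by nlinarith) (by nlinarith)]
          have hfac : (0:ℝ) ≤ (p - y) * (1 - p - y - p*y) := by
            apply mul_nonneg (by linarith)
            nlinarith
          nlinarith [hfac]
        have hneg : -2/(1-y) = -(2/(1-y)) := by ring
        rw [hc, hneg]; linarith
    exact hanti ⟨hx, hxp⟩ ⟨hp, le_refl p⟩ hxp
  · -- monotone on Icc p (1/2)
    have hmono : MonotoneOn (gfun c) (Set.Icc p (1/2)) := by
      apply monotoneOn_of_deriv_nonneg (convex_Icc p (1/2))
      · apply ContinuousOn.mono (fun y hy => (hcont y hy).continuousWithinAt)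
        intro y hy; exact ⟨lt_of_lt_of_le hp hy.1, lt_of_le_of_lt hy.2 (by norm_num)⟩
      · intro y hy
        rw [interior_Icc] at hy
        exact (gfun_hasDeriv c y (lt_trans hp hy.1) (by linarith [hy.2])).differentiableAt.differentiableWithinAt
      · intro y hy
        rw [interior_Icc] at hy
        obtain ⟨hy1, hy2⟩ := hy
        have hy0 : 0 < y := lt_trans hp hy1
        rw [(gfun_hasDeriv c y hy0 (by linarith)).deriv]
        have key : 2/(1-y) + 1/y ≤ 2/(1-p) + 1/p := by
          rw [div_add_div _ _ (by linarith : (1:ℝ)-p ≠ 0) (ne_of_gt hp),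
            div_add_div _ _ (by linarith : (1:ℝ)-y ≠ 0) (ne_of_gt hy0),
            div_le_div_iff₀ (by nlinarith) (by nlinarith)]
          have hfac : (0:ℝ) ≤ (y - p) * (1 - p - y - p*y) := by
            apply mul_nonneg (by linarith)
            nlinarith
          nlinarith [hfac]
        have hneg : -2/(1-y) = -(2/(1-y)) := by ring
        rw [hc, hneg]; linarith
    exact hmono ⟨le_refl p, by linarith⟩ ⟨le_of_lt hxp, hx2⟩ (le_of_lt hxp)


lemma caseA (m : ℕ) (hm : 3 ≤ m) (lam : Fin m → ℝ) (hpos : ∀ i, 0 < lam i)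
    (hsum : ∑ i, lam i = 1) (hhalf : ∀ i, lam i ≤ 1/2) :
    ((m:ℝ)-1)^(2*m) * ∏ i, lam i ≤ (m:ℝ)^m * (∏ i, (1 - lam i))^2 := by
  have hm3 : (3:ℝ) ≤ (m:ℝ) := by exact_mod_cast hm
  have hm0 : (0:ℝ) < m := by linarith
  have hm1 : (0:ℝ) < (m:ℝ) - 1 := by linarith
  set p : ℝ := 1/(m:ℝ) with hpdef
  have hp : 0 < p := by positivity
  have hp3 : p ≤ 1/3 := by
    rw [hpdef, div_le_div_iff₀ hm0 (by norm_num)]; linarith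
  set c : ℝ := 2/(1-p) + 1/p with hcdef
  have hkey : ∀ i, gfun c p ≤ gfun c (lam i) := fun i => tangent p hp hp3 (hpos i) (hhalf i)
  have hsum2 : (m:ℝ) * gfun c p ≤ ∑ i, gfun c (lam i) := by
    calc (m:ℝ) * gfun c p = ∑ _i : Fin m, gfun c p := by
          rw [Finset.sum_const, Finset.card_univ, Fintype.card_fin, nsmul_eq_mul]
      _ ≤ ∑ i, gfun c (lam i) := Finset.sum_le_sum (fun i _ => hkey i)
  have hexpand : ∑ i, gfun c (lam i)
      = 2 * ∑ i, Real.log (1 - lam i) - ∑ i, Real.log (lam i) + c := by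
    unfold gfun
    rw [Finset.sum_add_distrib, Finset.sum_sub_distrib, ← Finset.mul_sum, ← Finset.mul_sum, hsum,
      mul_one]
  have hmp : (m:ℝ) * (c * p) = c := by
    rw [hpdef]; field_simp
  have hlogp : Real.log p = -Real.log m := by
    rw [hpdef, one_div, Real.log_inv]
  have hlog1p : Real.log (1 - p) = Real.log ((m:ℝ)-1) - Real.log m := by
    rw [hpdef, show (1:ℝ) - 1/(m:ℝ) = ((m:ℝ)-1)/m by field_simp, Real.log_div (by linarith) (by linarith)]
  have hgp : (m:ℝ) * gfun c p = 2*(m:ℝ)*Real.log ((m:ℝ)-1) - (m:ℝ)*Real.log m + c := by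
    unfold gfun
    rw [mul_add, hmp, hlogp, hlog1p]; ring
  -- main log inequality
  have hmain : 2*(m:ℝ)*Real.log ((m:ℝ)-1) + ∑ i, Real.log (lam i)
      ≤ (m:ℝ)*Real.log m + 2 * ∑ i, Real.log (1 - lam i) := by
    rw [hexpand] at hsum2
    rw [hgp] at hsum2
    linarith
  -- convert to products
  have hL : (0:ℝ) < ((m:ℝ)-1)^(2*m) * ∏ i, lam i := by
    apply mul_pos (by positivity) (Finset.prod_pos (fun i _ => hpos i))
  have h1lam : ∀ i, (0:ℝ) < 1 - lam i := fun i => by linarith [hhalf i]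
  have hR : (0:ℝ) < (m:ℝ)^m * (∏ i, (1 - lam i))^2 := by
    apply mul_pos (by positivity)
    exact pow_pos (Finset.prod_pos (fun i _ => h1lam i)) 2
  rw [← Real.log_le_log_iff hL hR,
    Real.log_mul (ne_of_gt (by positivity)) (ne_of_gt (Finset.prod_pos (fun i _ => hpos i))),
    Real.log_mul (ne_of_gt (by positivity)) (ne_of_gt (pow_pos (Finset.prod_pos (fun i _ => h1lam i)) 2)),
    Real.log_pow, Real.log_pow, Real.log_pow,
    Real.log_prod (fun i _ => ne_of_gt (hpos i)),
    Real.log_prod (fun i _ => ne_of_gt (h1lam i))]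
  push_cast
  linarith [hmain]

lemma pow_ineq : ∀ m : ℕ, 4 ≤ m → 16 * ((m:ℝ)-1)^(m+1) ≤ 2^m * (m:ℝ)^m := by
  intro m hm
  induction m with
  | zero => omega
  | succ n ih =>
    rcases Nat.lt_or_ge n 4 with hn | hn
    · interval_cases n <;> first | omega | norm_num
    · have ihn := ih hn
      have hn4 : (4:ℝ) ≤ (n:ℝ) := by exact_mod_cast hn
      have hnsq : (0:ℝ) < (n:ℝ)^2 := by positivity
      have hbern : 1 - ((n:ℝ)+1) * (1/(n:ℝ)^2) ≤ (1 - 1/(n:ℝ)^2)^(n+1) := by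
        have h := one_add_mul_le_pow (a := -(1/(n:ℝ)^2)) (by
          have : 1/(n:ℝ)^2 ≤ 1 := by rw [div_le_one hnsq]; nlinarith
          linarith) (n+1)
        calc 1 - ((n:ℝ)+1) * (1/(n:ℝ)^2) = 1 + (↑(n+1)) * (-(1/(n:ℝ)^2)) := by push_cast; ring
          _ ≤ (1 + -(1/(n:ℝ)^2))^(n+1) := h
          _ = (1 - 1/(n:ℝ)^2)^(n+1) := by ring_nf
      have hhalf : (1:ℝ)/2 ≤ (1 - 1/(n:ℝ)^2)^(n+1) := by
        refine le_trans ?_ hbern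
        have : ((n:ℝ)+1) * (1/(n:ℝ)^2) ≤ 1/2 := by
          rw [mul_one_div, div_le_div_iff₀ hnsq (by norm_num)]
          nlinarith
        linarith
      have hA : (0:ℝ) < ((n:ℝ)^2)^(n+1) := by positivity
      have hkey : (n:ℝ)^(2*n+2) ≤ 2 * (((n:ℝ)-1)*((n:ℝ)+1))^(n+1) := by
        have hfact : ((n:ℝ)-1)*((n:ℝ)+1) = (n:ℝ)^2 * (1 - 1/(n:ℝ)^2) := by field_simp; ring
        have h1 := mul_le_mul_of_nonneg_left hhalf (le_of_lt (mul_pos two_pos hA))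
        have h2 : (n:ℝ)^(2*n+2) = ((n:ℝ)^2)^(n+1) := by rw [← pow_mul]; ring_nf
        rw [hfact, mul_pow, h2]
        nlinarith [h1]
      -- conclude
      have hnn : (0:ℝ) < (n:ℝ)^n := pow_pos (by linarith) n
      have hgoal : 16 * (n:ℝ)^(n+2) * (n:ℝ)^n ≤ (2^(n+1) * ((n:ℝ)+1)^(n+1)) * (n:ℝ)^n := by
        have e1 : 16 * (n:ℝ)^(n+2) * (n:ℝ)^n = 16 * (n:ℝ)^(2*n+2) := by
          rw [mul_assoc, ← pow_add]; ring_nf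
        rw [e1]
        calc 16 * (n:ℝ)^(2*n+2) ≤ 16 * (2 * (((n:ℝ)-1)*((n:ℝ)+1))^(n+1)) := by linarith
          _ = 2 * ((n:ℝ)+1)^(n+1) * (16 * ((n:ℝ)-1)^(n+1)) := by rw [mul_pow]; ring
          _ ≤ 2 * ((n:ℝ)+1)^(n+1) * (2^n * (n:ℝ)^n) := by
              apply mul_le_mul_of_nonneg_left ihn
              positivity
          _ = (2^(n+1) * ((n:ℝ)+1)^(n+1)) * (n:ℝ)^n := by ring
      have := le_of_mul_le_mul_right hgoal hnn
      push_cast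
      have e : ((n:ℝ)+1-1)^(n+1+1) = (n:ℝ)^(n+2) := by ring
      linarith [this, e]

lemma poly3 (r p : ℝ) (hr0 : 0 < r) (hr1 : r < 1) (hp0 : 0 < p) (hp : 4*p ≤ r^2) :
    64*(1-r)*p ≤ 27*(r*(1-r+p))^2 := by
  rcases le_or_gt (16/27 : ℝ) (r^2) with hbig | hsmall
  · nlinarith [sq_nonneg (54*r^2*p + (1-r)*(54*r^2-64)), sq_nonneg (1-r),
      mul_nonneg (mul_nonneg (sub_nonneg.mpr hbig) (sq_nonneg (1-r))) (by norm_num : (0:ℝ) ≤ 6912)]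
  · have hB : 54*r^2*(1-r/2)^2 - 64*(1-r) ≤ 0 := by nlinarith [sq_nonneg r, sq_nonneg (r-1)]
    have hC : 0 ≤ r^2*((3*r/2-1)^2*((3/4)*r^2-5*r+11)) := by
      apply mul_nonneg (sq_nonneg r)
      apply mul_nonneg (sq_nonneg _)
      nlinarith [sq_nonneg (r - 10/3)]
    have hple : p - r^2/4 ≤ 0 := by linarith
    have hslope : 0 ≤ (54*r^2*(1-r/2)^2 - 64*(1-r)) * (p - r^2/4) := by
      nlinarith [mul_nonneg (neg_nonneg.mpr hB) (neg_nonneg.mpr hple)]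
    nlinarith [sq_nonneg (p - r^2/4), hslope, hC, mul_nonneg (sq_nonneg (p - r^2/4)) (sq_nonneg r)]

lemma case3 (lam : Fin 3 → ℝ) (hpos : ∀ i, 0 < lam i) (hsum : ∑ i, lam i = 1) :
    ((3:ℕ):ℝ) ^ (3:ℕ) * (∏ i, (1 - lam i))^2 ≥ (((3:ℕ):ℝ)-1)^(2*3) * ∏ i, lam i := by
  have hs : lam 0 + lam 1 + lam 2 = 1 := by simpa [Fin.sum_univ_three] using hsum
  have h0 := hpos 0; have h1 := hpos 1; have h2 := hpos 2
  have key := poly3 (lam 1 + lam 2) (lam 1 * lam 2) (by linarith) (by linarith)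
    (mul_pos h1 h2) (by nlinarith [sq_nonneg (lam 1 - lam 2)])
  rw [Fin.prod_univ_three, Fin.prod_univ_three]
  have h0e : lam 0 = 1 - (lam 1 + lam 2) := by linarith
  rw [h0e]
  norm_num
  nlinarith [key]

lemma caseB (n : ℕ) (lam : Fin (n+4) → ℝ) (hpos : ∀ i, 0 < lam i)
    (hsum : ∑ i, lam i = 1) (k : Fin (n+4)) (hk : 1/2 < lam k) :
    (((n+4:ℕ):ℝ)-1)^(2*(n+4)) * ∏ i, lam i ≤ ((n+4:ℕ):ℝ)^(n+4) * (∏ i, (1 - lam i))^2 := by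
  classical
  set M : ℝ := ((n+4:ℕ):ℝ) with hM
  have hM4 : (4:ℝ) ≤ M := by rw [hM]; exact_mod_cast Nat.le_add_left 4 n
  set t : Finset (Fin (n+4)) := Finset.univ.erase k with ht
  have htcard : t.card = n + 3 := by
    rw [ht, Finset.card_erase_of_mem (mem_univ k), Finset.card_univ, Fintype.card_fin]
    omega
  have htne : t.Nonempty := Finset.card_pos.mp (by omega)
  have hsplit : lam k + ∑ i ∈ t, lam i = 1 := by
    rw [ht, Finset.add_sum_erase _ _ (mem_univ k)]; exact hsum
  set r : ℝ := ∑ i ∈ t, lam i with hr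
  have hrpos : 0 < r := Finset.sum_pos (fun i _ => hpos i) htne
  have hkr : lam k = 1 - r := by linarith
  have hk1 : lam k < 1 := by linarith
  have hrhalf : r < 1/2 := by linarith
  have hle_r : ∀ i ∈ t, lam i ≤ r := fun i hi =>
    Finset.single_le_sum (fun j _ => le_of_lt (hpos j)) hi
  -- Weierstrass
  have hW : 1 - r ≤ ∏ i ∈ t, (1 - lam i) :=
    weier t lam (fun i _ => le_of_lt (hpos i)) (fun i hi => by linarith [hle_r i hi])
  have hWpos : 0 < ∏ i ∈ t, (1 - lam i) := lt_of_lt_of_le (by linarith) hW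
  -- AM-GM
  have hPr : ∏ i ∈ t, lam i ≤ (r/(M-1))^(n+3) := by
    have := amgm t htne lam (fun i _ => le_of_lt (hpos i))
    rw [htcard] at this
    have hcast : ((n+3:ℕ):ℝ) = M - 1 := by rw [hM]; push_cast; ring
    rw [← hr] at this
    rwa [hcast] at this
  have hPrpos : 0 < ∏ i ∈ t, lam i := Finset.prod_pos (fun i _ => hpos i)
  -- split products
  have hprod1 : ∏ i, lam i = lam k * ∏ i ∈ t, lam i :=
    (Finset.mul_prod_erase univ lam (mem_univ k)).symm
  have hprod2 : ∏ i, (1 - lam i) = (1 - lam k) * ∏ i ∈ t, (1 - lam i) :=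
    (Finset.mul_prod_erase univ (fun i => 1 - lam i) (mem_univ k)).symm
  rw [hprod1, hprod2, hkr]
  have h1k : (1:ℝ) - (1 - r) = r := by ring
  rw [h1k]
  -- abbreviations
  set W := ∏ i ∈ t, (1 - lam i)
  set Pr := ∏ i ∈ t, lam i
  set K := 1 - r with hKdef
  have hKpos : (0:ℝ) < K := by simp only [hKdef]; linarith
  have hKhalf : (1:ℝ)/2 < K := by simp only [hKdef]; linarith
  -- step 1 : replace Pr
  have hM1 : (0:ℝ) < M - 1 := by linarith
  have step1 : (M-1)^(2*(n+4)) * (K * Pr) ≤ (M-1)^(n+5) * K * (r^2 * r^(n+1)) := by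
    have e1 : (M-1)^(2*(n+4)) = (M-1)^(n+5) * (M-1)^(n+3) := by rw [← pow_add]; ring_nf
    have e2 : (M-1)^(n+3) * (r/(M-1))^(n+3) = r^(n+3) := by
      rw [div_pow, mul_comm, div_mul_cancel₀]
      exact pow_ne_zero _ (ne_of_gt hM1)
    have e3 : r^(n+3) = r^2 * r^(n+1) := by ring
    calc (M-1)^(2*(n+4)) * (K * Pr) ≤ (M-1)^(2*(n+4)) * (K * (r/(M-1))^(n+3)) := by
          apply mul_le_mul_of_nonneg_left _ (by positivity)
          exact mul_le_mul_of_nonneg_left hPr (le_of_lt hKpos)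
      _ = (M-1)^(n+5) * K * (r^2 * r^(n+1)) := by
          rw [e1, ← e3, ← e2]; ring
  -- step 2 : RHS lower bound
  have hWK : K ≤ W := hW
  have step2 : M^(n+4) * (r^2 * K^2) ≤ M^(n+4) * (r * W)^2 := by
    have : K^2 ≤ W^2 := by nlinarith
    have e : (r*W)^2 = r^2 * W^2 := by ring
    rw [e]
    apply mul_le_mul_of_nonneg_left _ (by positivity)
    nlinarith [sq_nonneg r]
  -- step 3 : the numeric core
  have hA := pow_ineq (n+4) (by omega)
  have hMcast : ((n+4:ℕ):ℝ) = M := rfl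
  -- hA : 16 * (M-1)^(n+4+1) ≤ 2^(n+4) * M^(n+4)
  have h2r : r^(n+1) * 2^(n+1) ≤ 1 := by
    have : (2*r)^(n+1) ≤ 1 := pow_le_one₀ (by linarith) (by linarith)
    calc r^(n+1) * 2^(n+1) = (2*r)^(n+1) := by rw [← mul_pow]; ring_nf
      _ ≤ 1 := this
  have step3 : (M-1)^(n+5) * K * (r^2 * r^(n+1)) ≤ M^(n+4) * (r^2 * K^2) := by
    have hBpos : (0:ℝ) < M^(n+4) := by positivity
    have hApos : (0:ℝ) < (M-1)^(n+5) := by positivity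
    have h2pos : (0:ℝ) < (2:ℝ)^(n+1) := by positivity
    have hup : r^(n+1) ≤ 1/2^(n+1) := by
      rw [le_div_iff₀ h2pos]; exact h2r
    have hAA : (M-1)^(n+5) ≤ 2^(n+4) * M^(n+4) / 16 := by
      rw [le_div_iff₀ (by norm_num : (0:ℝ) < 16)]
      calc (M-1)^(n+5) * 16 = 16 * (M-1)^(n+4+1) := by ring_nf
        _ ≤ 2^(n+4) * M^(n+4) := hA
    calc (M-1)^(n+5) * K * (r^2 * r^(n+1))
        ≤ (M-1)^(n+5) * K * (r^2 * (1/2^(n+1))) := by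
          apply mul_le_mul_of_nonneg_left _ (by positivity)
          apply mul_le_mul_of_nonneg_left hup (sq_nonneg r)
      _ ≤ (2^(n+4) * M^(n+4) / 16) * K * (r^2 * (1/2^(n+1))) := by
          apply mul_le_mul_of_nonneg_right _ (by positivity)
          exact mul_le_mul_of_nonneg_right hAA (le_of_lt hKpos)
      _ = M^(n+4) * (r^2 * (K * (2^(n+4) / (16 * 2^(n+1))))) := by ring
      _ ≤ M^(n+4) * (r^2 * K^2) := by
          apply mul_le_mul_of_nonneg_left _ (le_of_lt hBpos)
          apply mul_le_mul_of_nonneg_left _ (sq_nonneg r)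
          have e4 : (2:ℝ)^(n+4) / (16 * 2^(n+1)) = 1/2 := by
            rw [show n+4 = (n+1)+3 by ring, pow_add]
            field_simp; ring
          rw [e4]
          nlinarith
  calc (M-1)^(2*(n+4)) * (K * Pr) ≤ (M-1)^(n+5) * K * (r^2 * r^(n+1)) := step1
    _ ≤ M^(n+4) * (r^2 * K^2) := step3
    _ ≤ M^(n+4) * (r * W)^2 := step2

lemma main_sum1 (m : ℕ) (hm : 3 ≤ m) (lam : Fin m → ℝ) (hpos : ∀ i, 0 < lam i)
    (hsum : ∑ i, lam i = 1) :
    ((m:ℝ)-1)^(2*m) * ∏ i, lam i ≤ (m:ℝ)^m * (∏ i, (1 - lam i))^2 := by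
  rcases (show m = 3 ∨ 4 ≤ m by omega) with h3 | h4
  · subst h3
    exact case3 lam hpos hsum
  · obtain ⟨n, rfl⟩ : ∃ n, m = n + 4 := ⟨m - 4, by omega⟩
    by_cases hex : ∃ k, 1/2 < lam k
    · obtain ⟨k, hk⟩ := hex
      exact caseB n lam hpos hsum k hk
    · push_neg at hex
      exact caseA (n+4) (by omega) lam hpos hsum hex

lemma main_sumle1 (m : ℕ) (hm : 3 ≤ m) (lam : Fin m → ℝ) (hpos : ∀ i, 0 < lam i)
    (hsum : ∑ i, lam i ≤ 1) :
    ((m:ℝ)-1)^(2*m) * ∏ i, lam i ≤ (m:ℝ)^m * (∏ i, (1 - lam i))^2 := by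
  set s := ∑ i, lam i with hs
  have hne : (Finset.univ : Finset (Fin m)).Nonempty := by
    rw [Finset.univ_nonempty_iff]
    exact Fin.pos_iff_nonempty.mp (by omega)
  have hs0 : 0 < s := Finset.sum_pos (fun i _ => hpos i) hne
  set mu : Fin m → ℝ := fun i => lam i / s with hmu
  have hmupos : ∀ i, 0 < mu i := fun i => div_pos (hpos i) hs0
  have hmusum : ∑ i, mu i = 1 := by
    rw [hmu, ← Finset.sum_div, ← hs, div_self (ne_of_gt hs0)]
  have hlammu : ∀ i, lam i ≤ mu i := by
    intro i
    rw [hmu]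
    rw [le_div_iff₀ hs0]
    nlinarith [hpos i]
  have hmult1 : ∀ i, mu i < 1 := by
    intro i
    rw [hmu, div_lt_one hs0, hs]
    obtain ⟨j, hj⟩ : ∃ j : Fin m, j ≠ i := by
      have : 1 < Fintype.card (Fin m) := by simp; omega
      exact Fintype.exists_ne_of_one_lt_card this i
    exact Finset.single_lt_sum hj (mem_univ i) (mem_univ j) (hpos j)
      (fun k _ _ => le_of_lt (hpos k))
  have h1 := main_sum1 m hm mu hmupos hmusum
  have hprodlam : ∏ i, lam i ≤ ∏ i, mu i :=
    Finset.prod_le_prod (fun i _ => le_of_lt (hpos i)) (fun i _ => hlammu i)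
  have hprodmu : ∏ i, (1 - mu i) ≤ ∏ i, (1 - lam i) :=
    Finset.prod_le_prod (fun i _ => by linarith [hmult1 i]) (fun i _ => by linarith [hlammu i])
  have hsq : (∏ i, (1 - mu i))^2 ≤ (∏ i, (1 - lam i))^2 := by
    apply pow_le_pow_left₀ (Finset.prod_nonneg (fun i _ => by linarith [hmult1 i])) hprodmu
  have hcoef : (0:ℝ) ≤ ((m:ℝ)-1)^(2*m) := by
    have h1m : (1:ℝ) ≤ (m:ℝ) := by exact_mod_cast Nat.one_le_of_lt hm
    exact pow_nonneg (by linarith) _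
  have hmm : (0:ℝ) ≤ (m:ℝ)^m := by positivity
  calc ((m:ℝ)-1)^(2*m) * ∏ i, lam i ≤ ((m:ℝ)-1)^(2*m) * ∏ i, mu i :=
        mul_le_mul_of_nonneg_left hprodlam hcoef
    _ ≤ (m:ℝ)^m * (∏ i, (1 - mu i))^2 := h1
    _ ≤ (m:ℝ)^m * (∏ i, (1 - lam i))^2 := mul_le_mul_of_nonneg_left hsq hmm

lemma trace_eq (m : ℕ) (H : Matrix (Fin m) (Fin m) ℝ) (hH : H.IsHermitian) :
    H.trace = ∑ i, hH.eigenvalues i := by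
  conv_lhs => rw [hH.spectral_theorem, Unitary.conjStarAlgAut_apply]
  rw [Matrix.trace_mul_cycle]
  simp [Matrix.mul_assoc, Matrix.trace_diagonal]

lemma det_one_sub (m : ℕ) (H : Matrix (Fin m) (Fin m) ℝ) (hH : H.IsHermitian) :
    (1 - H).det = ∏ i, (1 - hH.eigenvalues i) := by
  set U : Matrix (Fin m) (Fin m) ℝ := (hH.eigenvectorUnitary : Matrix (Fin m) (Fin m) ℝ) with hUdef
  have hU : U * star U = 1 := (Matrix.mem_unitaryGroup_iff).mp (hH.eigenvectorUnitary).2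
  have hU' : star U * U = 1 := (Matrix.mem_unitaryGroup_iff').mp (hH.eigenvectorUnitary).2
  have h1 : (1 : Matrix (Fin m) (Fin m) ℝ) - H
      = U * (1 - diagonal (RCLike.ofReal ∘ hH.eigenvalues)) * (star U) := by
    rw [Matrix.mul_sub, Matrix.sub_mul, Matrix.mul_one, hU]
    conv_lhs => rw [hH.spectral_theorem, Unitary.conjStarAlgAut_apply]
  have hdetU : (star U).det * U.det = 1 := by
    rw [← Matrix.det_mul, hU', Matrix.det_one]
  have h2 : (1 : Matrix (Fin m) (Fin m) ℝ) - diagonal (RCLike.ofReal ∘ hH.eigenvalues)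
      = diagonal (fun i => 1 - hH.eigenvalues i) := by
    rw [← Matrix.diagonal_one, Matrix.diagonal_sub]
    rfl
  rw [h1, Matrix.det_mul, Matrix.det_mul, h2, Matrix.det_diagonal]
  linear_combination (∏ i : Fin m, (1 - hH.eigenvalues i)) * hdetU

end BCGAux

open BCGAux in
/-- **Jacobian bound.** If `H` and `K = I - H` are positive definite symmetric
`m × m` matrices with `tr H ≤ 1` and `m ≥ 3`, and `J ≥ 0` satisfies
`det K · J ≤ ((m-1)^m / m^(m/2)) · (det H)^(1/2)`, then `J ≤ 1`. -/
theorem jacobian_le_one (m : ℕ) (hm : 3 ≤ m)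
    (H K : Matrix (Fin m) (Fin m) ℝ) (hHpos : H.PosDef) (hKpos : K.PosDef)
    (hK : K = 1 - H) (htr : H.trace ≤ 1)
    (J : ℝ) (hJ : 0 ≤ J)
    (hineq : K.det * J ≤ (((m : ℝ) - 1) ^ m / (m : ℝ) ^ ((m : ℝ) / 2)) * Real.sqrt H.det) :
    J ≤ 1 := by
  have hH : H.IsHermitian := hHpos.1
  set lam := hH.eigenvalues with hlam
  have hpos : ∀ i, 0 < lam i := fun i => hHpos.eigenvalues_pos i
  have hsum : ∑ i, lam i ≤ 1 := by
    rw [← trace_eq m H hH]; exact htr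
  have hdetH : H.det = ∏ i, lam i := by
    simpa using hH.det_eq_prod_eigenvalues
  have hdetK : K.det = ∏ i, (1 - lam i) := by
    rw [hK]; exact det_one_sub m H hH
  have hdetHpos : 0 < H.det := hHpos.det_pos
  have hdetKpos : 0 < K.det := hKpos.det_pos
  have hscalar : ((m:ℝ)-1)^(2*m) * H.det ≤ (m:ℝ)^m * K.det^2 := by
    rw [hdetH, hdetK]
    exact main_sumle1 m hm lam hpos hsum
  have hm3 : (3:ℝ) ≤ (m:ℝ) := by exact_mod_cast hm
  have hm0 : (0:ℝ) < (m:ℝ) := by linarith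
  set C : ℝ := ((m : ℝ) - 1) ^ m / (m : ℝ) ^ ((m : ℝ) / 2) with hC
  have hCnn : 0 ≤ C := by
    apply div_nonneg (pow_nonneg (by linarith) m) (le_of_lt (Real.rpow_pos_of_pos hm0 _))
  have hCsq : C^2 = ((m:ℝ)-1)^(2*m) / (m:ℝ)^m := by
    rw [hC, div_pow]
    have h1 : (((m:ℝ)-1)^m)^2 = ((m:ℝ)-1)^(2*m) := by rw [← pow_mul]; ring_nf
    have h2 : ((m:ℝ)^((m:ℝ)/2))^2 = (m:ℝ)^m := by
      rw [← Real.rpow_natCast ((m:ℝ) ^ ((m:ℝ)/2)) 2, ← Real.rpow_mul (le_of_lt hm0)]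
      norm_num
    rw [h1, h2]
  have hkey : C * Real.sqrt H.det ≤ K.det := by
    have hsq : (C * Real.sqrt H.det)^2 ≤ K.det^2 := by
      rw [mul_pow, Real.sq_sqrt (le_of_lt hdetHpos), hCsq]
      rw [div_mul_eq_mul_div, div_le_iff₀ (by positivity)]
      calc ((m:ℝ)-1)^(2*m) * H.det ≤ (m:ℝ)^m * K.det^2 := hscalar
        _ = K.det^2 * (m:ℝ)^m := by ring
    have h1 := Real.sqrt_le_sqrt hsq
    rwa [Real.sqrt_sq (mul_nonneg hCnn (Real.sqrt_nonneg _)),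
      Real.sqrt_sq (le_of_lt hdetKpos)] at h1
  have : K.det * J ≤ K.det * 1 := by
    rw [mul_one]
    exact le_trans hineq hkey
  exact le_of_mul_le_mul_left this hdetKpos
end
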